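/- arXiv:1104.0720 — 7 statements merged into one kernel-verified Lean document; each statement's English description precedes it below -/
import Mathlib

section
/- Let d ≥ 1 be an integer, σ > 0, and s < 1 − d/2. Let (g_k)_{k ∈ ℤ^d} be a family of independent real centered Gaussian random variables with Var(g_k) ≤ σ²/(2(1 + ‖k‖²)) for every k. Then the random series ∑_{k ∈ ℤ^d} (1 + ‖k‖²)^s g_k² is finite almost surely. -/
open MeasureTheory ProbabilityTheory

set_option maxHeartbeats 1000000
open Real
open scoped ENNReal NNReal

lemma sumZ {q : ℝ} (hq : q < -(1/2)) : Summable fun n : ℤ => (1 + (n:ℝ)^2) ^ q := by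
  have hq0 : q ≤ 0 := by linarith
  have hnat : Summable fun n : ℕ => (1 + (n:ℝ)^2) ^ q := by
    have hbase : Summable fun n : ℕ => (((n:ℝ)+1) ^ 2) ^ q := by
      have h0 := (Real.summable_nat_rpow (p := 2*q)).mpr (by linarith)
      have h' := h0.comp_injective (add_left_injective 1)
      refine h'.congr fun n => ?_
      show ((((n+1:ℕ)):ℝ)) ^ (2*q) = (((n:ℝ)+1)^2) ^ q
      rw [← Real.rpow_natCast ((n:ℝ)+1) 2, ← Real.rpow_mul (by positivity)]
      push_cast
      ring_nf
    refine Summable.of_nonneg_of_le (fun n => Real.rpow_nonneg (by positivity) _)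
      (fun n => ?_) (hbase.mul_left ((2:ℝ) ^ (-q)))
    have h1 : ((n:ℝ)+1)^2 ≤ 2 * (1 + (n:ℝ)^2) := by nlinarith [sq_nonneg ((n:ℝ)-1)]
    calc (1 + (n:ℝ)^2) ^ q = ((2 * (1 + (n:ℝ)^2)) / 2) ^ q := by
          norm_num
      _ = (2 * (1 + (n:ℝ)^2)) ^ q / 2 ^ q := Real.div_rpow (by positivity) (by norm_num : (0:ℝ) ≤ 2) q
      _ ≤ (((n:ℝ)+1)^2) ^ q / 2 ^ q := by
          have hle := Real.rpow_le_rpow_of_nonpos (by positivity : (0:ℝ) < ((n:ℝ)+1)^2) h1 hq0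
          rw [div_eq_mul_inv, div_eq_mul_inv]
          exact mul_le_mul_of_nonneg_right hle (by positivity)
      _ = 2 ^ (-q) * (((n:ℝ)+1)^2) ^ q := by
          rw [Real.rpow_neg (by norm_num)]; ring
  apply Summable.of_nat_of_neg
  · exact hnat.congr fun n => by norm_num
  · exact hnat.congr fun n => by push_cast; ring_nf

lemma sumProd (h : ℤ → ℝ) (hnn : ∀ n, 0 ≤ h n) (hs : Summable h) :
    ∀ n : ℕ, Summable fun k : Fin n → ℤ => ∏ i, h (k i) := by
  intro n
  induction n with
  | zero => exact summable_of_finite_support (Set.toFinite _)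
  | succ m ih =>
    have hf' : (0 : ℤ → ℝ) ≤ h := hnn
    have hg' : (0 : (Fin m → ℤ) → ℝ) ≤ fun k => ∏ i, h (k i) :=
      fun k => Finset.prod_nonneg fun i _ => hnn _
    have hprod : Summable fun x : ℤ × (Fin m → ℤ) => h x.1 * ∏ i, h (x.2 i) :=
      Summable.mul_of_nonneg (g := fun k : Fin m → ℤ => ∏ i, h (k i)) hs ih hf' hg'
    have := hprod.comp_injective (Fin.consEquiv fun _ : Fin (m+1) => ℤ).symm.injective
    refine this.congr fun k => ?_
    simp [Fin.consEquiv, Fin.prod_univ_succ, Fin.tail]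

lemma sumLattice (d : ℕ) (hd : 1 ≤ d) {p : ℝ} (hp : p < -((d:ℝ)/2)) :
    Summable fun k : Fin d → ℤ => (1 + ∑ i, ((k i:ℝ))^2) ^ p := by
  have hd0 : (0:ℝ) < d := by exact_mod_cast hd
  have hq : p / d < -(1/2) := by
    rw [div_lt_iff₀ hd0]
    calc p < -((d:ℝ)/2) := hp
      _ = -(1/2) * d := by ring
  have hp0 : p ≤ 0 := by nlinarith
  have hmaj := (sumProd (fun n : ℤ => (1 + (n:ℝ)^2) ^ (p/d))
    (fun n => Real.rpow_nonneg (by positivity) _) (sumZ hq)) d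
  refine Summable.of_nonneg_of_le (fun k => Real.rpow_nonneg (by positivity) _)
    (fun k => ?_) hmaj
  have hA : (0:ℝ) < 1 + ∑ i, ((k i:ℝ))^2 := by positivity
  have hB : ∏ i, (1 + ((k i:ℝ))^2) ≤ (1 + ∑ i, ((k i:ℝ))^2) ^ d := by
    calc ∏ i, (1 + ((k i:ℝ))^2) ≤ ∏ i : Fin d, (1 + ∑ j, ((k j:ℝ))^2) := by
          refine Finset.prod_le_prod (fun i _ => by positivity) (fun i _ => ?_)
          have : ((k i:ℝ))^2 ≤ ∑ j, ((k j:ℝ))^2 :=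
            Finset.single_le_sum (f := fun j => ((k j:ℝ))^2) (fun j _ => sq_nonneg _) (Finset.mem_univ i)
          linarith
      _ = (1 + ∑ i, ((k i:ℝ))^2) ^ d := by
          rw [Finset.prod_const, Finset.card_univ, Fintype.card_fin]
  calc (1 + ∑ i, ((k i:ℝ))^2) ^ p
      = ((1 + ∑ i, ((k i:ℝ))^2) ^ d) ^ (p/d) := by
        rw [← Real.rpow_natCast _ d, ← Real.rpow_mul hA.le]
        congr 1
        field_simp
    _ ≤ (∏ i, (1 + ((k i:ℝ))^2)) ^ (p/d) := by
        refine Real.rpow_le_rpow_of_nonpos ?_ hB (by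
          apply div_nonpos_of_nonpos_of_nonneg hp0 hd0.le)
        positivity
    _ = ∏ i, (1 + ((k i:ℝ))^2) ^ (p/d) := by
        rw [← Real.finset_prod_rpow _ _ (fun i _ => by positivity)]

lemma hm_sq : Measurable fun x : ℝ => ENNReal.ofReal (x^2) := by fun_prop

lemma gauss_c_lt_top : ∫⁻ x, ENNReal.ofReal (x^2) ∂(gaussianReal 0 1) < ⊤ := by
  rw [gaussianReal_of_var_ne_zero 0 one_ne_zero,
    lintegral_withDensity_eq_lintegral_mul _ (measurable_gaussianPDF 0 1)
      hm_sq]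
  have hint : Integrable (fun x : ℝ => x^2 * gaussianPDFReal 0 1 x) := by
    have h0 := integrable_rpow_mul_exp_neg_mul_sq (b := 1/2) (by norm_num) (s := 2) (by norm_num)
    have h1 : Integrable (fun x : ℝ => x^2 * Real.exp (-(1/2) * x^2)) := by
      refine h0.congr ?_
      filter_upwards with x
      have hx : (x:ℝ) ^ (2:ℝ) = x ^ (2:ℕ) := by
        rw [show (2:ℝ) = ((2:ℕ):ℝ) by norm_num, Real.rpow_natCast]
      rw [hx]
    refine (h1.const_mul ((Real.sqrt (2 * Real.pi))⁻¹)).congr ?_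
    filter_upwards with x
    simp only [gaussianPDFReal]
    push_cast
    ring_nf
  have heq : ∫⁻ x, (gaussianPDF 0 1 * fun x => ENNReal.ofReal (x^2)) x
      = ∫⁻ x, ENNReal.ofReal (x^2 * gaussianPDFReal 0 1 x) := by
    refine lintegral_congr fun x => ?_
    rw [Pi.mul_apply, gaussianPDF, ← ENNReal.ofReal_mul (gaussianPDFReal_nonneg 0 1 x)]
    congr 1
    ring
  rw [heq]
  exact hint.lintegral_lt_top

lemma gauss_moment (v : NNReal) :
    ∫⁻ x, ENNReal.ofReal (x^2) ∂(gaussianReal 0 v)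
      = (v : ℝ≥0∞) * ∫⁻ x, ENNReal.ofReal (x^2) ∂(gaussianReal 0 1) := by
  by_cases hv : v = 0
  · subst hv
    rw [gaussianReal_zero_var, lintegral_dirac' _ hm_sq]
    simp
  · have hmap := gaussianReal_map_const_mul (μ := 0) (v := 1) (Real.sqrt v)
    have hvar : (⟨(Real.sqrt v)^2, sq_nonneg _⟩ : NNReal) * 1 = v := by
      ext
      simp [Real.sq_sqrt v.coe_nonneg]
    rw [mul_zero] at hmap
    erw [hvar] at hmap
    rw [← hmap, lintegral_map hm_sq (by fun_prop : Measurable fun x : ℝ => Real.sqrt v * x)]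
    rw [← lintegral_const_mul _ hm_sq]
    refine lintegral_congr fun x => ?_
    rw [← ENNReal.ofReal_coe_nnreal, ← ENNReal.ofReal_mul v.coe_nonneg]
    congr 1
    rw [mul_pow, Real.sq_sqrt v.coe_nonneg]

/-- Let `d ≥ 1`, `σ > 0` and `s < 1 − d/2`. If `(g_k)_{k ∈ ℤ^d}` is a
family of independent real centered Gaussian random variables with
`Var(g_k) ≤ σ²/(2(1 + ‖k‖²))` for every `k`, then the random series
`∑_{k ∈ ℤ^d} (1 + ‖k‖²)^s g_k²` is finite almost surely. -/
theorem heat_solution_in_sobolev_a_s (d : ℕ) (hd : 1 ≤ d) (σ s : ℝ) (hσ : 0 < σ)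
    (hs : s < 1 - (d : ℝ) / 2)
    {Ω : Type*} [MeasurableSpace Ω] (μ : Measure Ω) [IsProbabilityMeasure μ]
    (g : (Fin d → ℤ) → Ω → ℝ)
    (hindep : iIndepFun g μ)
    (hgauss : ∀ k : Fin d → ℤ, ∃ v : NNReal,
      (v : ℝ) ≤ σ ^ 2 / (2 * (1 + ∑ i, ((k i : ℝ)) ^ 2)) ∧
      μ.map (g k) = gaussianReal 0 v) :
    ∀ᵐ ω ∂μ,
      Summable (fun k : Fin d → ℤ => (1 + ∑ i, ((k i : ℝ)) ^ 2) ^ s * (g k ω) ^ 2) := by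
  classical
  choose v hv hmap using hgauss
  set A : (Fin d → ℤ) → ℝ := fun k => 1 + ∑ i, ((k i : ℝ)) ^ 2 with hA
  have hA1 : ∀ k, (1:ℝ) ≤ A k := by
    intro k
    have : (0:ℝ) ≤ ∑ i, ((k i : ℝ)) ^ 2 := Finset.sum_nonneg fun i _ => sq_nonneg _
    simp [hA]; linarith
  have hA0 : ∀ k, (0:ℝ) < A k := fun k => lt_of_lt_of_le one_pos (hA1 k)
  have hgm : ∀ k, AEMeasurable (g k) μ := fun k =>
    aemeasurable_of_map_neZero (by rw [hmap k]; infer_instance)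
  set C : ℝ≥0∞ := ∫⁻ x, ENNReal.ofReal (x^2) ∂(gaussianReal 0 1) with hC
  -- lintegral of each term
  set F : (Fin d → ℤ) → Ω → ℝ≥0∞ := fun k ω => ENNReal.ofReal (A k ^ s * (g k ω) ^ 2) with hF
  have hFm : ∀ k, AEMeasurable (F k) μ := by
    intro k
    exact ENNReal.measurable_ofReal.comp_aemeasurable
      ((aemeasurable_const.mul ((hgm k).pow aemeasurable_const)))
  have hint : ∀ k, ∫⁻ ω, F k ω ∂μ ≤ ENNReal.ofReal (A k ^ s * (σ^2 / (2 * A k))) * C := by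
    intro k
    have h1 : ∫⁻ ω, F k ω ∂μ
        = ENNReal.ofReal (A k ^ s) * ∫⁻ ω, ENNReal.ofReal ((g k ω)^2) ∂μ := by
      rw [← lintegral_const_mul' _ _ ENNReal.ofReal_ne_top]
      refine lintegral_congr fun ω => ?_
      show ENNReal.ofReal (A k ^ s * g k ω ^ 2) = _
      exact ENNReal.ofReal_mul (Real.rpow_nonneg (hA0 k).le s)
    have h2 : ∫⁻ ω, ENNReal.ofReal ((g k ω)^2) ∂μ
        = ∫⁻ x, ENNReal.ofReal (x^2) ∂(μ.map (g k)) :=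
      (lintegral_map' hm_sq.aemeasurable (hgm k)).symm
    rw [h1, h2, hmap k, gauss_moment, ← mul_assoc,
      ENNReal.ofReal_mul (Real.rpow_nonneg (hA0 k).le s)]
    gcongr
    rw [← ENNReal.ofReal_coe_nnreal]
    exact ENNReal.ofReal_le_ofReal (by simpa [hA] using hv k)
  -- summability of the bound
  have hsum : Summable fun k => (σ^2/2) * A k ^ (s - 1) := by
    refine Summable.mul_left _ ?_
    exact (sumLattice d hd (p := s - 1) (by push_cast; linarith)).congr fun k => rfl
  have hbound : ∀ k, A k ^ s * (σ^2 / (2 * A k)) = (σ^2/2) * A k ^ (s - 1) := by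
    intro k
    rw [Real.rpow_sub_one (hA0 k).ne']
    field_simp
  have htsum : ∑' k, ∫⁻ ω, F k ω ∂μ < ⊤ := by
    have hCne : C ≠ ⊤ := gauss_c_lt_top.ne
    calc ∑' k, ∫⁻ ω, F k ω ∂μ
        ≤ ∑' k, ENNReal.ofReal ((σ^2/2) * A k ^ (s - 1)) * C := by
          refine ENNReal.tsum_le_tsum fun k => ?_
          rw [← hbound k]; exact hint k
      _ = (∑' k, ENNReal.ofReal ((σ^2/2) * A k ^ (s - 1))) * C := ENNReal.tsum_mul_right
      _ = ENNReal.ofReal (∑' k, (σ^2/2) * A k ^ (s - 1)) * C := by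
          rw [ENNReal.ofReal_tsum_of_nonneg
            (fun k => mul_nonneg (by positivity) (Real.rpow_nonneg (hA0 k).le _)) hsum]
      _ < ⊤ := ENNReal.mul_lt_top ENNReal.ofReal_lt_top gauss_c_lt_top
  have hae : ∀ᵐ ω ∂μ, ∑' k, F k ω < ⊤ := by
    refine ae_lt_top' (AEMeasurable.ennreal_tsum hFm) ?_
    rw [lintegral_tsum hFm]
    exact htsum.ne
  filter_upwards [hae] with ω hω
  have hnn : ∀ k, 0 ≤ A k ^ s * (g k ω)^2 :=
    fun k => mul_nonneg (Real.rpow_nonneg (hA0 k).le s) (sq_nonneg _)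
  have h1 : ∑' k, ((A k ^ s * (g k ω)^2).toNNReal : ℝ≥0∞) ≠ ⊤ := by
    refine ne_of_lt (lt_of_eq_of_lt ?_ hω)
    refine tsum_congr fun k => ?_
    rfl
  have h2 := ENNReal.tsum_coe_ne_top_iff_summable.mp h1
  have h3 := NNReal.summable_coe.mpr h2
  refine h3.congr fun k => ?_
  simp [Real.coe_toNNReal _ (hnn k), hA]
  exact hnn k
end

section
/- Let d ≥ 2 be an integer, σ > 0 and t > 0. Let (g_k)_{k ∈ ℤ^d} be independent real centered Gaussian random variables with Var(g_k) = σ²(1 − e^{−2(1+‖k‖²)t})/(2(1 + ‖k‖²)). Then ∑_{k ∈ ℤ^d} g_k² = +∞ almost surely. -/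
open MeasureTheory ProbabilityTheory

section AuxHeat
open Filter Topology

lemma aux_exp_le {y : ℝ} (hy : 0 ≤ y) : Real.exp (-y) ≤ 1 - min y 1 / 2 := by
  rcases le_total y 1 with h | h
  · rw [min_eq_left h]
    have h1 : y + 1 ≤ Real.exp y := Real.add_one_le_exp y
    have h3 : 0 < Real.exp y := Real.exp_pos y
    rw [Real.exp_neg y, inv_le_iff_one_le_mul₀ h3]
    nlinarith
  · rw [min_eq_right h]
    have h1 : Real.exp (-y) ≤ Real.exp (-1) := Real.exp_le_exp.2 (by linarith)
    have h3 : (2:ℝ) ≤ Real.exp 1 := by have := Real.add_one_le_exp 1; linarith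
    have : Real.exp (-1) ≤ 1/2 := by
      rw [Real.exp_neg 1, inv_le_iff_one_le_mul₀ (Real.exp_pos 1)]; linarith
    linarith


lemma aux_int_min_sq (ν : Measure ℝ) [IsProbabilityMeasure ν] (b : ℝ) (hb : 0 < b) (c : ℝ) :
    Integrable (fun x => min ((c * x)^2) b) ν := by
  have hm : Measurable (fun x : ℝ => min ((c*x)^2) b) :=
    ((measurable_const.mul measurable_id).pow_const 2).min measurable_const
  refine Integrable.mono' (integrable_const b) hm.aestronglyMeasurable ?_
  refine Filter.Eventually.of_forall fun x => ?_
  rw [Real.norm_eq_abs, abs_of_nonneg (le_min (sq_nonneg _) hb.le)]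
  exact min_le_right _ _

lemma gauss_min_lower {V : ℝ} (hV : 0 < V) {v : NNReal} (hv0 : 0 < (v:ℝ)) (hvV : (v:ℝ) ≤ V) :
    (v:ℝ) * ∫ z, min (z^2) V⁻¹ ∂(gaussianReal 0 1) ≤ ∫ x, min (x^2) 1 ∂(gaussianReal 0 v) := by
  set s : ℝ := Real.sqrt v with hs
  have hs2 : s^2 = (v:ℝ) := Real.sq_sqrt v.2
  have hmap : (gaussianReal 0 1).map (s * ·) = gaussianReal 0 v := by
    rw [gaussianReal_map_const_mul s]
    congr 1
    · ring
    · ext; simp [hs2]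
  have hint : ∫ x, min (x^2) 1 ∂(gaussianReal 0 v)
      = ∫ z, min ((s*z)^2) 1 ∂(gaussianReal 0 1) := by
    rw [← hmap, integral_map (measurable_const_mul s).aemeasurable]
    exact ((measurable_id.pow_const 2).min measurable_const).aestronglyMeasurable
  rw [hint]
  simp_rw [← smul_eq_mul (a := (v:ℝ)), ← integral_smul]
  simp_rw [smul_eq_mul]
  have hint1 : Integrable (fun z => min ((s*z)^2) 1) (gaussianReal 0 1) :=
    aux_int_min_sq _ 1 one_pos s
  have hint2 : Integrable (fun z => (v:ℝ) * min (z^2) V⁻¹) (gaussianReal 0 1) := by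
    have : Integrable (fun z => min (z^2) V⁻¹) (gaussianReal 0 1) := by
      simpa using aux_int_min_sq (gaussianReal 0 1) V⁻¹ (by positivity) 1
    exact this.const_mul _
  refine integral_mono hint2 hint1 fun z => ?_
  have hsz : (s*z)^2 = (v:ℝ) * z^2 := by rw [mul_pow, hs2]
  have hVv : (v:ℝ) * V⁻¹ ≤ 1 := by
    rw [← mul_inv_cancel₀ hV.ne']
    exact mul_le_mul_of_nonneg_right hvV (by positivity)
  rcases le_total (z^2) V⁻¹ with h | h
  · rw [min_eq_left h, hsz]
    refine le_min le_rfl ?_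
    calc (v:ℝ) * z^2 ≤ (v:ℝ) * V⁻¹ := by
          exact mul_le_mul_of_nonneg_left h v.2
    _ ≤ 1 := hVv
  · rw [min_eq_right h, hsz]
    refine le_min ?_ hVv
    exact mul_le_mul_of_nonneg_left h v.2

lemma factor_bound {Ω : Type*} [MeasurableSpace Ω] (μ : Measure Ω) [IsProbabilityMeasure μ]
    {V : ℝ} (hV : 0 < V) {v : NNReal} (hv0 : 0 < (v:ℝ)) (hvV : (v:ℝ) ≤ V)
    {X : Ω → ℝ} (hX : Measurable X) (hmap : μ.map X = gaussianReal 0 v) :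
    ∫⁻ ω, ENNReal.ofReal (Real.exp (-(X ω)^2)) ∂μ
      ≤ ENNReal.ofReal (Real.exp (-((∫ z, min (z^2) V⁻¹ ∂(gaussianReal 0 1))/2 * v))) := by
  set c₀ : ℝ := ∫ z, min (z^2) V⁻¹ ∂(gaussianReal 0 1) with hc₀
  have hintX : Integrable (fun ω => Real.exp (-(X ω)^2)) μ := by
    refine Integrable.mono' (integrable_const 1)
      ((Real.measurable_exp.comp ((hX.pow_const 2).neg)).aestronglyMeasurable) ?_
    refine Filter.Eventually.of_forall fun ω => ?_
    rw [Real.norm_eq_abs, abs_of_nonneg (Real.exp_pos _).le]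
    exact Real.exp_le_one_iff.mpr (neg_nonpos.mpr (sq_nonneg _))
  rw [← ofReal_integral_eq_lintegral_ofReal hintX
    (Filter.Eventually.of_forall fun ω => (Real.exp_pos _).le)]
  apply ENNReal.ofReal_le_ofReal
  have h1 : ∫ ω, Real.exp (-(X ω)^2) ∂μ = ∫ x, Real.exp (-x^2) ∂(gaussianReal 0 v) := by
    rw [← hmap, integral_map hX.aemeasurable]
    exact (Real.measurable_exp.comp ((measurable_id.pow_const 2).neg)).aestronglyMeasurable
  rw [h1]
  have hint1 : Integrable (fun x => min (x^2) 1) (gaussianReal 0 v) := by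
    simpa using aux_int_min_sq (gaussianReal 0 v) 1 one_pos 1
  have hintexp : Integrable (fun x => Real.exp (-x^2)) (gaussianReal 0 v) := by
    refine Integrable.mono' (integrable_const 1)
      ((Real.measurable_exp.comp ((measurable_id.pow_const 2).neg)).aestronglyMeasurable) ?_
    refine Filter.Eventually.of_forall fun x => ?_
    rw [Real.norm_eq_abs, abs_of_nonneg (Real.exp_pos _).le]
    exact Real.exp_le_one_iff.mpr (neg_nonpos.mpr (sq_nonneg _))
  have h2 : ∫ x, Real.exp (-x^2) ∂(gaussianReal 0 v)
      ≤ ∫ x, (1 - min (x^2) 1 / 2) ∂(gaussianReal 0 v) := by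
    refine integral_mono hintexp ((integrable_const 1).sub (hint1.div_const 2))
      fun x => aux_exp_le (sq_nonneg x)
  have h3 : ∫ x, (1 - min (x^2) 1 / 2) ∂(gaussianReal 0 v)
      = 1 - (∫ x, min (x^2) 1 ∂(gaussianReal 0 v)) / 2 := by
    rw [integral_sub (integrable_const 1) (hint1.div_const 2), integral_div]
    simp
  have h4 := gauss_min_lower hV hv0 hvV
  have h5 : -((c₀:ℝ)/2 * v) + 1 ≤ Real.exp (-(c₀/2 * v)) := Real.add_one_le_exp _
  calc ∫ x, Real.exp (-x^2) ∂(gaussianReal 0 v)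
      ≤ 1 - (∫ x, min (x^2) 1 ∂(gaussianReal 0 v)) / 2 := by rw [← h3]; exact h2
  _ ≤ 1 - (v:ℝ) * c₀ / 2 := by linarith
  _ ≤ Real.exp (-(c₀/2 * v)) := by linarith

lemma aux_harmonic {c : ℝ} (hc : 0 < c) :
    ∑' n : ℕ, ENNReal.ofReal (c / (n + 1)) = ⊤ := by
  by_contra h
  have hs := ENNReal.summable_toReal h
  have hnn : ∀ n : ℕ, (0:ℝ) ≤ c / (n+1) := fun n => by positivity
  have hs' : Summable (fun n : ℕ => c / (n+1)) := by
    refine hs.congr fun n => ?_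
    rw [ENNReal.toReal_ofReal (hnn n)]
  have hs'' : Summable (fun n : ℕ => 1 / ((n:ℝ)+1)) := by
    have := hs'.mul_left c⁻¹
    refine this.congr fun n => ?_
    field_simp
  have : ¬ Summable (fun n : ℕ => 1 / ((n:ℝ)+1)) := by
    have h0 : ¬ Summable (fun n : ℕ => 1 / (n:ℝ)) := Real.not_summable_one_div_natCast
    intro hsum
    apply h0
    have h1 : Summable (fun n : ℕ => 1 / ((n+1 : ℕ):ℝ)) := by
      refine hsum.congr fun n => ?_
      push_cast
      ring_nf
    exact (summable_nat_add_iff (f := fun n : ℕ => 1/(n:ℝ)) 1).1 h1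
  exact this hs''

lemma gauss_c0_pos {V : ℝ} (hV : 0 < V) :
    0 < ∫ z, min (z^2) V⁻¹ ∂(gaussianReal 0 1) := by
  have hint : Integrable (fun z => min (z^2) V⁻¹) (gaussianReal 0 1) := by
    simpa using aux_int_min_sq (gaussianReal 0 1) V⁻¹ (by positivity) 1
  have hnn : (0:ℝ → ℝ) ≤ (fun z => min (z^2) V⁻¹) := fun z => le_min (sq_nonneg _) (by positivity)
  rw [integral_pos_iff_support_of_nonneg hnn hint]
  have hsub : ({0}ᶜ : Set ℝ) ⊆ Function.support (fun z => min (z^2) V⁻¹) := by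
    intro z hz
    have hz' : z ≠ 0 := hz
    have : 0 < min (z^2) V⁻¹ := lt_min (by positivity) (by positivity)
    exact ne_of_gt this
  have h0 : gaussianReal 0 1 {(0:ℝ)} = 0 := by
    have hac := gaussianReal_absolutelyContinuous (0:ℝ) (one_ne_zero (α := NNReal))
    exact hac (measure_singleton 0)
  have : gaussianReal 0 1 ({0}ᶜ : Set ℝ) = 1 := by
    rw [measure_compl (measurableSet_singleton 0) (measure_ne_top _ _), h0, measure_univ]
    simp
  calc (0:ENNReal) < 1 := by norm_num
  _ = gaussianReal 0 1 ({0}ᶜ : Set ℝ) := this.symm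
  _ ≤ _ := measure_mono hsub

lemma iIndepFun_congr_ae {ι Ω : Type*} [MeasurableSpace Ω] {μ : Measure Ω} {f f' : ι → Ω → ℝ}
    (h : iIndepFun f μ) (h' : ∀ i, f i =ᵐ[μ] f' i) :
    iIndepFun f' μ := by
  rw [iIndepFun_iff_measure_inter_preimage_eq_mul] at h ⊢
  intro S sets hsets
  have hall : ∀ᵐ ω ∂μ, ∀ i ∈ S, f i ω = f' i ω :=
    (ae_ball_iff S.countable_toSet).mpr fun i _ => h' i
  have h2 : (⋂ i ∈ S, f' i ⁻¹' sets i) =ᵐ[μ] (⋂ i ∈ S, f i ⁻¹' sets i) := by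
    filter_upwards [hall] with ω hω
    show (ω ∈ ⋂ i ∈ S, f' i ⁻¹' sets i) = (ω ∈ ⋂ i ∈ S, f i ⁻¹' sets i)
    rw [eq_iff_iff]
    simp only [Set.mem_iInter, Set.mem_preimage]
    constructor <;> intro hmem i hi
    · rw [hω i hi]; exact hmem i hi
    · rw [← hω i hi]; exact hmem i hi
  rw [measure_congr h2, h S hsets]
  refine Finset.prod_congr rfl fun i hi => ?_
  refine measure_congr ?_
  filter_upwards [h' i] with ω hω
  show (ω ∈ f i ⁻¹' sets i) = (ω ∈ f' i ⁻¹' sets i)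
  simp only [Set.mem_preimage, eq_iff_iff, hω]

lemma lintegral_prod_indep {ι Ω : Type*} [MeasurableSpace Ω] {μ : Measure Ω}
    [IsProbabilityMeasure μ] {F : ι → Ω → ENNReal} (hmeas : ∀ i, Measurable (F i))
    (hind : iIndepFun F μ) (s : Finset ι) :
    ∫⁻ ω, ∏ i ∈ s, F i ω ∂μ = ∏ i ∈ s, ∫⁻ ω, F i ω ∂μ := by
  classical
  induction s using Finset.induction with
  | empty => simp
  | @insert i s hi ih =>
    rw [Finset.prod_insert hi, ← ih]
    have hfi : IndepFun (F i) (∏ j ∈ s, F j) μ :=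
      (hind.indepFun_finsetProd_of_notMem hmeas hi).symm
    have hprodmeas : Measurable (∏ j ∈ s, F j) := by
      simpa [Finset.prod_fn] using Finset.measurable_prod s fun j _ => hmeas j
    have := lintegral_mul_eq_lintegral_mul_lintegral_of_indepFun (hmeas i) hprodmeas hfi
    calc ∫⁻ ω, ∏ j ∈ Insert.insert i s, F j ω ∂μ
        = ∫⁻ ω, (F i * ∏ j ∈ s, F j) ω ∂μ := by
          apply lintegral_congr fun ω => ?_
          simp [Finset.prod_insert hi, Finset.prod_apply]
      _ = (∫⁻ ω, F i ω ∂μ) * ∫⁻ ω, (∏ j ∈ s, F j) ω ∂μ := this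
      _ = (∫⁻ ω, F i ω ∂μ) * ∫⁻ ω, ∏ j ∈ s, F j ω ∂μ := by
          congr 1
          exact lintegral_congr fun ω => by rw [Finset.prod_apply]

lemma aux_divergence (d : ℕ) (hd : 2 ≤ d) {C : ℝ} (hC : 0 < C) :
    ∑' k : Fin d → ℤ, ENNReal.ofReal (C / (1 + ∑ i, ((k i : ℝ)) ^ 2)) = ⊤ := by
  rw [← top_le_iff]
  set i0 : Fin d := ⟨0, by omega⟩
  set i1 : Fin d := ⟨1, by omega⟩
  have hne : i0 ≠ i1 := by simp [i0, i1, Fin.ext_iff]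
  set φ : ℕ × ℕ → (Fin d → ℤ) := fun p i => if i = i0 then (p.1 : ℤ) else if i = i1 then (p.2 : ℤ) else 0 with hφ
  have hφinj : Function.Injective φ := by
    intro p q h
    have h0 := congrFun h i0
    have h1 := congrFun h i1
    simp only [φ, if_pos rfl, if_neg (Ne.symm hne)] at h0 h1
    have h1' : (p.2 : ℤ) = (q.2 : ℤ) := by simpa [Ne.symm hne] using h1
    exact Prod.ext (by exact_mod_cast h0) (by exact_mod_cast h1')
  have hsum : ∀ p : ℕ × ℕ, ∑ i, ((φ p i : ℝ)) ^ 2 = (p.1 : ℝ) ^ 2 + (p.2 : ℝ) ^ 2 := by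
    intro p
    have hterm : ∀ i : Fin d, ((φ p i : ℝ)) ^ 2
        = (if i = i0 then ((p.1 : ℝ)) ^ 2 else 0) + (if i = i1 then ((p.2 : ℝ)) ^ 2 else 0) := by
      intro i
      by_cases h0 : i = i0
      · subst h0; simp [φ, hne]
      · by_cases h1 : i = i1
        · subst h1; simp [φ, Ne.symm hne, h0]
        · simp [φ, h0, h1]
    rw [Finset.sum_congr rfl fun i _ => hterm i, Finset.sum_add_distrib,
      Finset.sum_ite_eq' Finset.univ i0, Finset.sum_ite_eq' Finset.univ i1]
    simp
  calc (⊤ : ENNReal) = ∑' n : ℕ, ENNReal.ofReal ((C / 3) / (n + 1)) :=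
      (aux_harmonic (by positivity)).symm
  _ ≤ ∑' n : ℕ, ∑' m : ℕ, ENNReal.ofReal (C / (1 + ((n : ℝ) ^ 2 + (m : ℝ) ^ 2))) := by
      refine ENNReal.tsum_le_tsum fun n => ?_
      have hstep1 : ENNReal.ofReal ((C / 3) / (n + 1))
          ≤ ∑ m ∈ Finset.range (n + 1), ENNReal.ofReal (C / (1 + ((n : ℝ) ^ 2 + (m : ℝ) ^ 2))) := by
        have hterm : ∀ m ∈ Finset.range (n + 1),
            ENNReal.ofReal (C / (3 * ((n : ℝ) + 1) ^ 2))
              ≤ ENNReal.ofReal (C / (1 + ((n : ℝ) ^ 2 + (m : ℝ) ^ 2))) := by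
          intro m hm
          have hmn : (m : ℝ) ≤ (n : ℝ) := by
            exact_mod_cast Nat.lt_succ_iff.mp (Finset.mem_range.mp hm)
          refine ENNReal.ofReal_le_ofReal ?_
          have hden : (0:ℝ) < 1 + ((n : ℝ) ^ 2 + (m : ℝ) ^ 2) := by positivity
          refine div_le_div_of_nonneg_left hC.le hden ?_
          nlinarith [sq_nonneg ((n:ℝ) - (m:ℝ)), Nat.cast_nonneg (α := ℝ) n, Nat.cast_nonneg (α := ℝ) m]
        calc ENNReal.ofReal ((C / 3) / (n + 1))
            = ((n + 1 : ℕ) : ENNReal) * ENNReal.ofReal (C / (3 * ((n : ℝ) + 1) ^ 2)) := by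
              rw [← ENNReal.ofReal_natCast (n + 1), ← ENNReal.ofReal_mul (by positivity)]
              congr 1
              have hn1 : ((n : ℝ) + 1) ≠ 0 := by positivity
              push_cast
              field_simp
          _ = (Finset.range (n + 1)).card • ENNReal.ofReal (C / (3 * ((n : ℝ) + 1) ^ 2)) := by
              rw [Finset.card_range]; simp [nsmul_eq_mul]
          _ ≤ ∑ m ∈ Finset.range (n + 1), ENNReal.ofReal (C / (1 + ((n : ℝ) ^ 2 + (m : ℝ) ^ 2))) :=
              Finset.card_nsmul_le_sum _ _ _ hterm
      exact le_trans hstep1 (ENNReal.sum_le_tsum _)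
  _ = ∑' p : ℕ × ℕ, ENNReal.ofReal (C / (1 + ((p.1 : ℝ) ^ 2 + (p.2 : ℝ) ^ 2))) :=
      ENNReal.tsum_prod.symm
  _ = ∑' p : ℕ × ℕ, ENNReal.ofReal (C / (1 + ∑ i, ((φ p i : ℝ)) ^ 2)) := by
      exact tsum_congr fun p => by rw [hsum p]
  _ ≤ ∑' k : Fin d → ℤ, ENNReal.ofReal (C / (1 + ∑ i, ((k i : ℝ)) ^ 2)) :=
      ENNReal.tsum_comp_le_tsum_of_injective hφinj _

/-- Let `d ≥ 2`, `σ > 0`, `t > 0`. If `(g_k)_{k ∈ ℤ^d}` are independent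
real centered Gaussian random variables with
`Var(g_k) = σ²(1 − e^{−2(1+‖k‖²)t})/(2(1 + ‖k‖²))`, then `∑_{k ∈ ℤ^d} g_k² = +∞`
almost surely. -/
theorem heat_solution_not_L2_a_s (d : ℕ) (hd : 2 ≤ d) (σ t : ℝ) (hσ : 0 < σ) (ht : 0 < t)
    {Ω : Type*} [MeasurableSpace Ω] (μ : Measure Ω) [IsProbabilityMeasure μ]
    (g : (Fin d → ℤ) → Ω → ℝ)
    (hindep : iIndepFun g μ)
    (hgauss : ∀ k : Fin d → ℤ, ∃ v : NNReal,
      (v : ℝ) = σ ^ 2 * (1 - Real.exp (-2 * (1 + ∑ i, ((k i : ℝ)) ^ 2) * t)) /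
        (2 * (1 + ∑ i, ((k i : ℝ)) ^ 2)) ∧
      μ.map (g k) = gaussianReal 0 v) :
    ∀ᵐ ω ∂μ, ∑' k : Fin d → ℤ, ENNReal.ofReal ((g k ω) ^ 2) = ⊤ := by
  classical
  choose v hv hmap using hgauss
  have haone : ∀ k : Fin d → ℤ, (1:ℝ) ≤ 1 + ∑ i, ((k i : ℝ))^2 := fun k => by
    have : (0:ℝ) ≤ ∑ i, ((k i : ℝ))^2 := Finset.sum_nonneg fun i _ => sq_nonneg _
    linarith
  set V : ℝ := σ^2/2 with hVdef
  have hVpos : 0 < V := by positivity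
  have hv0 : ∀ k, 0 < (v k : ℝ) := by
    intro k
    rw [hv k]
    have ha := haone k
    have hexp : Real.exp (-2 * (1 + ∑ i, ((k i : ℝ))^2) * t) < 1 := by
      rw [Real.exp_lt_one_iff]
      nlinarith
    apply div_pos
    · nlinarith [sq_nonneg σ]
    · nlinarith
  have hvV : ∀ k, (v k : ℝ) ≤ V := by
    intro k
    rw [hv k, hVdef]
    have ha := haone k
    have hexp : 0 < Real.exp (-2 * (1 + ∑ i, ((k i : ℝ))^2) * t) := Real.exp_pos _
    rw [div_le_div_iff₀ (by nlinarith) (by norm_num)]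
    nlinarith [sq_nonneg σ]
  set C : ℝ := σ^2 * (1 - Real.exp (-2*t)) / 2 with hCdef
  have hCpos : 0 < C := by
    have h1 : Real.exp (-2*t) < 1 := by rw [Real.exp_lt_one_iff]; linarith
    rw [hCdef]
    apply div_pos
    · nlinarith [sq_nonneg σ]
    · norm_num
  have hvlow : ∀ k, ENNReal.ofReal (C / (1 + ∑ i, ((k i : ℝ))^2)) ≤ ENNReal.ofReal (v k) := by
    intro k
    apply ENNReal.ofReal_le_ofReal
    rw [hv k]
    have ha := haone k
    have h1 : Real.exp (-2 * (1 + ∑ i, ((k i : ℝ))^2) * t) ≤ Real.exp (-2*t) := by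
      apply Real.exp_le_exp.2
      nlinarith
    rw [hCdef, div_le_div_iff₀ (by nlinarith) (by nlinarith)]
    nlinarith [mul_nonneg (mul_nonneg (sq_nonneg σ)
      (show (0:ℝ) ≤ 1 + ∑ i, ((k i : ℝ))^2 by linarith)) (sub_nonneg.mpr h1)]
  have hdiv : ∑' k : Fin d → ℤ, ENNReal.ofReal (v k : ℝ) = ⊤ :=
    top_le_iff.mp (le_trans (le_of_eq (aux_divergence d hd hCpos).symm)
      (ENNReal.tsum_le_tsum hvlow))
  have hgm : ∀ k, AEMeasurable (g k) μ := fun k => by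
    apply aemeasurable_of_map_neZero
    rw [hmap k]
    infer_instance
  set G : (Fin d → ℤ) → Ω → ℝ := fun k => (hgm k).mk (g k) with hGdef
  have hGmeas : ∀ k, Measurable (G k) := fun k => (hgm k).measurable_mk
  have hae : ∀ k, g k =ᵐ[μ] G k := fun k => (hgm k).ae_eq_mk
  have hGmap : ∀ k, μ.map (G k) = gaussianReal 0 (v k) := fun k => by
    rw [← Measure.map_congr (hae k)]; exact hmap k
  have hGindep : iIndepFun G μ := iIndepFun_congr_ae hindep hae
  have hφemeas : Measurable (fun x : ℝ => ENNReal.ofReal (Real.exp (-(x^2)))) :=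
    ENNReal.measurable_ofReal.comp (Real.measurable_exp.comp ((measurable_id.pow_const 2).neg))
  set F : (Fin d → ℤ) → Ω → ENNReal :=
    fun k => (fun x : ℝ => ENNReal.ofReal (Real.exp (-(x^2)))) ∘ (G k) with hFdef
  have hFmeas : ∀ k, Measurable (F k) := fun k => hφemeas.comp (hGmeas k)
  have hFindep : iIndepFun F μ := hGindep.comp _ (fun _ => hφemeas)
  set c₀ : ℝ := ∫ z, min (z^2) V⁻¹ ∂(gaussianReal 0 1) with hc₀def
  have hc₀pos : 0 < c₀ := gauss_c0_pos hVpos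
  have hfac : ∀ k, ∫⁻ ω, F k ω ∂μ ≤ ENNReal.ofReal (Real.exp (-(c₀/2 * v k))) := by
    intro k
    rw [hc₀def]
    exact factor_bound μ hVpos (hv0 k) (hvV k) (hGmeas k) (hGmap k)
  have hprod : ∀ s : Finset (Fin d → ℤ),
      ∫⁻ ω, ∏ k ∈ s, F k ω ∂μ ≤ ENNReal.ofReal (Real.exp (-(c₀/2 * ∑ k ∈ s, (v k : ℝ)))) := by
    intro s
    rw [lintegral_prod_indep hFmeas hFindep s]
    calc ∏ k ∈ s, ∫⁻ ω, F k ω ∂μ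
        ≤ ∏ k ∈ s, ENNReal.ofReal (Real.exp (-(c₀/2 * v k))) :=
          Finset.prod_le_prod' (fun k _ => hfac k)
      _ = ENNReal.ofReal (∏ k ∈ s, Real.exp (-(c₀/2 * v k))) :=
          (ENNReal.ofReal_prod_of_nonneg fun k _ => (Real.exp_pos _).le).symm
      _ = ENNReal.ofReal (Real.exp (-(c₀/2 * ∑ k ∈ s, (v k : ℝ)))) := by
          rw [← Real.exp_sum]
          congr 1
          rw [Finset.mul_sum, Finset.sum_neg_distrib]
  haveI : Nonempty (Fin d) := ⟨⟨0, by omega⟩⟩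
  haveI : Infinite (Fin d → ℤ) := Function.infinite_of_right
  obtain ⟨dnm⟩ := nonempty_denumerable (Fin d → ℤ)
  set e : ℕ ≃ (Fin d → ℤ) := (@Denumerable.eqv (Fin d → ℤ) dnm).symm with hedef
  set sn : ℕ → Finset (Fin d → ℤ) := fun n => (Finset.range n).image e with hsndef
  have hsum_sn : ∀ n, ∑ k ∈ sn n, (v k : ℝ) = ∑ j ∈ Finset.range n, (v (e j) : ℝ) := by
    intro n
    rw [hsndef]
    exact Finset.sum_image (fun a _ b _ hab => e.injective hab)
  set R : ℕ → ℝ := fun n => ∑ j ∈ Finset.range n, (v (e j) : ℝ) with hRdef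
  have hRmono : Monotone R := fun a b hab =>
    Finset.sum_le_sum_of_subset_of_nonneg (Finset.range_subset_range.mpr hab)
      (fun j _ _ => (v (e j)).2)
  have hRtop : Tendsto R atTop atTop := by
    refine tendsto_atTop_atTop_of_monotone hRmono ?_
    intro b
    by_contra hb
    push_neg at hb
    have hle : ∀ n, ∑ j ∈ Finset.range n, ENNReal.ofReal (v (e j) : ℝ) ≤ ENNReal.ofReal b := by
      intro n
      calc ∑ j ∈ Finset.range n, ENNReal.ofReal (v (e j) : ℝ)
          = ENNReal.ofReal (∑ j ∈ Finset.range n, (v (e j) : ℝ)) :=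
            (ENNReal.ofReal_sum_of_nonneg (fun j _ => (v (e j)).2)).symm
        _ ≤ ENNReal.ofReal b := ENNReal.ofReal_le_ofReal (hb n).le
    have htsum : ∑' j : ℕ, ENNReal.ofReal (v (e j) : ℝ) = ⊤ := by
      rw [e.tsum_eq (fun k => ENNReal.ofReal (v k : ℝ))]
      exact hdiv
    have hlim := ENNReal.tendsto_nat_tsum (fun j => ENNReal.ofReal (v (e j) : ℝ))
    rw [htsum] at hlim
    exact ENNReal.ofReal_ne_top (top_le_iff.mp (le_of_tendsto' hlim hle))
  have hexp0 : Tendsto (fun n => ENNReal.ofReal (Real.exp (-(c₀/2 * R n)))) atTop (𝓝 0) := by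
    have h1 : Tendsto (fun n => -(c₀/2 * R n)) atTop atBot := by
      have h2 := hRtop.const_mul_atTop (show (0:ℝ) < c₀/2 by positivity)
      exact tendsto_neg_atTop_atBot.comp h2
    have h2 : Tendsto (fun n => Real.exp (-(c₀/2 * R n))) atTop (𝓝 0) :=
      Real.tendsto_exp_atBot.comp h1
    simpa using ENNReal.tendsto_ofReal h2
  have haeall : ∀ᵐ ω ∂μ, ∀ k, g k ω = G k ω := ae_all_iff.mpr hae
  suffices hGoal : ∀ᵐ ω ∂μ, ∑' k : Fin d → ℤ, ENNReal.ofReal ((G k ω) ^ 2) = ⊤ by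
    filter_upwards [hGoal, haeall] with ω h1 h2
    rw [← h1]
    exact tsum_congr fun k => by rw [h2 k]
  rw [ae_iff]
  set B : ℕ → Set Ω := fun M => {ω | ∑' k : Fin d → ℤ, ENNReal.ofReal ((G k ω) ^ 2) ≤ M}
    with hBdef
  have hsubset : {ω | ¬ ∑' k : Fin d → ℤ, ENNReal.ofReal ((G k ω) ^ 2) = ⊤} ⊆ ⋃ M : ℕ, B M := by
    intro ω hω
    obtain ⟨M, hM⟩ := ENNReal.exists_nat_gt (hω : _ ≠ ⊤)
    exact Set.mem_iUnion.mpr ⟨M, le_of_lt hM⟩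
  refine measure_mono_null hsubset (measure_iUnion_null fun M => ?_)
  have key : ∀ n, ENNReal.ofReal (Real.exp (-(M:ℝ))) * μ (B M)
      ≤ ENNReal.ofReal (Real.exp (-(c₀/2 * R n))) := by
    intro n
    have hTle : ∀ ω ∈ B M, ENNReal.ofReal (Real.exp (-(M:ℝ))) ≤ ∏ k ∈ sn n, F k ω := by
      intro ω hω
      have hsum_le : (∑ k ∈ sn n, (G k ω) ^ 2) ≤ (M:ℝ) := by
        have h1 : ENNReal.ofReal (∑ k ∈ sn n, (G k ω) ^ 2) ≤ (M : ENNReal) := by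
          rw [ENNReal.ofReal_sum_of_nonneg (fun k _ => sq_nonneg _)]
          exact le_trans (ENNReal.sum_le_tsum (sn n)) hω
        rw [← ENNReal.ofReal_natCast M] at h1
        exact (ENNReal.ofReal_le_ofReal_iff (Nat.cast_nonneg M)).mp h1
      have hprodω : ∏ k ∈ sn n, F k ω
          = ENNReal.ofReal (Real.exp (-(∑ k ∈ sn n, (G k ω) ^ 2))) := by
        calc ∏ k ∈ sn n, F k ω
            = ENNReal.ofReal (∏ k ∈ sn n, Real.exp (-((G k ω) ^ 2))) :=
              (ENNReal.ofReal_prod_of_nonneg fun k _ => (Real.exp_pos _).le).symm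
          _ = _ := by rw [← Real.exp_sum]; congr 1; rw [Finset.sum_neg_distrib]
      rw [hprodω]
      apply ENNReal.ofReal_le_ofReal
      exact Real.exp_le_exp.2 (by linarith)
    calc ENNReal.ofReal (Real.exp (-(M:ℝ))) * μ (B M)
        ≤ ENNReal.ofReal (Real.exp (-(M:ℝ)))
            * μ {ω | ENNReal.ofReal (Real.exp (-(M:ℝ))) ≤ ∏ k ∈ sn n, F k ω} := by
          exact mul_le_mul_right (measure_mono fun ω hω => hTle ω hω) _
      _ ≤ ∫⁻ ω, ∏ k ∈ sn n, F k ω ∂μ :=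
          mul_meas_ge_le_lintegral₀
            ((Finset.measurable_prod (sn n) fun k _ => hFmeas k).aemeasurable) _
      _ ≤ ENNReal.ofReal (Real.exp (-(c₀/2 * ∑ k ∈ sn n, (v k : ℝ)))) := hprod (sn n)
      _ = ENNReal.ofReal (Real.exp (-(c₀/2 * R n))) := by rw [hsum_sn n]
  have h0 : ENNReal.ofReal (Real.exp (-(M:ℝ))) * μ (B M) = 0 :=
    le_zero_iff.mp (ge_of_tendsto hexp0 (Eventually.of_forall key))
  rcases mul_eq_zero.mp h0 with h | h
  · exact absurd h (by simp [Real.exp_pos])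
  · exact h

end AuxHeat
end

section
/- Define R(c) = (∫₀^∞ x² e^{−c(x²−1)²} dx) / (∫₀^∞ e^{−c(x²−1)²} dx) for c > 0. Then there exist constants 0 < a ≤ A such that a·c^{−1/2} ≤ R(c) ≤ A·c^{−1/2} for all c ∈ (0, 1]. In particular R(c) → ∞ at rate c^{−1/2} as c → 0⁺. -/
open MeasureTheory Set Real

namespace SMGR

/-- `e^{-u} ≤ 4/u²` for `u > 0`. -/
lemma exp_neg_le_four_div_sq {u : ℝ} (hu : 0 < u) : Real.exp (-u) ≤ 4 / u ^ 2 := by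
  have h0 : (u / 2 + 1) ≤ Real.exp (u / 2) := by
    have := Real.add_one_le_exp (u / 2); linarith
  have h1 : u ^ 2 / 4 ≤ Real.exp u := by
    have h2 : (u / 2 + 1) ^ 2 ≤ (Real.exp (u / 2)) ^ 2 := by
      apply pow_le_pow_left₀ (by positivity) h0
    have h3 : (Real.exp (u / 2)) ^ 2 = Real.exp u := by
      rw [sq, ← Real.exp_add]; norm_num
    nlinarith
  rw [Real.exp_neg]
  rw [inv_eq_one_div, div_le_div_iff₀ (Real.exp_pos u) (by positivity)]
  nlinarith

/-- pointwise tail bound -/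
lemma tail_ptw {c x : ℝ} (hc : 0 < c) (hx : 2 ≤ x) :
    Real.exp (-c * (x ^ 2 - 1) ^ 2) ≤ 64 / (c ^ 2 * x ^ 8) := by
  have hx0 : 0 < x := by linarith
  have h4 : (0:ℝ) ≤ x ^ 2 - 4 := by nlinarith
  have h1 : c * x ^ 4 / 4 ≤ c * (x ^ 2 - 1) ^ 2 := by
    nlinarith [mul_nonneg hc.le (sq_nonneg (x ^ 2 - 2)), mul_nonneg hc.le h4]
  have h2 : 0 < c * x ^ 4 / 4 := by positivity
  calc Real.exp (-c * (x ^ 2 - 1) ^ 2) ≤ Real.exp (-(c * x ^ 4 / 4)) := by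
        apply Real.exp_le_exp.2; linarith
    _ ≤ 4 / (c * x ^ 4 / 4) ^ 2 := exp_neg_le_four_div_sq h2
    _ = 64 / (c ^ 2 * x ^ 8) := by
        field_simp
        ring

/-- integrability -/
lemma intOn (c : ℝ) (hc : 0 < c) (n : ℕ) :
    IntegrableOn (fun x => x ^ n * Real.exp (-c * (x ^ 2 - 1) ^ 2)) (Set.Ioi (0:ℝ)) := by
  have hcont : Continuous (fun x : ℝ => x ^ n * Real.exp (-c * (x ^ 2 - 1) ^ 2)) := by
    continuity
  have h1 : IntegrableOn (fun x => x ^ n * Real.exp (-c * (x ^ 2 - 1) ^ 2)) (Set.Ioc (0:ℝ) 2) :=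
    hcont.integrableOn_Ioc
  have h2 : IntegrableOn (fun x => x ^ n * Real.exp (-c * (x ^ 2 - 1) ^ 2)) (Set.Ioi (2:ℝ)) := by
    have hmaj : IntegrableOn (fun x : ℝ => x ^ (n : ℝ) * Real.exp (-(c/2) * x ^ 2)) (Set.Ioi (2:ℝ)) :=
      (integrableOn_rpow_mul_exp_neg_mul_sq (by positivity) (by have := Nat.cast_nonneg (α := ℝ) n; linarith)).mono_set
        (Set.Ioi_subset_Ioi (by norm_num))
    apply Integrable.mono' hmaj (hcont.aestronglyMeasurable)
    rw [ae_restrict_iff' measurableSet_Ioi]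
    filter_upwards with x hx
    have hx2 : (2:ℝ) < x := hx
    have hx0 : (0:ℝ) < x := by linarith
    have h4 : (0:ℝ) ≤ x ^ 2 - 4 := by nlinarith
    have hb : c * (x ^ 2 - 1) ^ 2 ≥ c / 2 * x ^ 2 := by
      nlinarith [mul_nonneg hc.le (mul_nonneg h4 (sq_nonneg x)), mul_nonneg hc.le (sq_nonneg x)]
    have he : Real.exp (-c * (x ^ 2 - 1) ^ 2) ≤ Real.exp (-(c/2) * x ^ 2) := by
      apply Real.exp_le_exp.2; linarith
    have hxr : x ^ (n : ℝ) = x ^ n := Real.rpow_natCast x n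
    rw [Real.norm_eq_abs, abs_mul, abs_of_nonneg (by positivity : (0:ℝ) ≤ x ^ n),
      abs_of_nonneg (Real.exp_pos _).le, hxr]
    exact mul_le_mul_of_nonneg_left he (by positivity)
  have : Set.Ioi (0:ℝ) = Set.Ioc (0:ℝ) 2 ∪ Set.Ioi 2 := (Set.Ioc_union_Ioi_eq_Ioi (by norm_num)).symm
  rw [this]
  exact h1.union h2


-- M facts
lemma M_pos {c : ℝ} (hc : 0 < c) : 0 < c ^ (-(1:ℝ)/4) := Real.rpow_pos_of_pos hc _

lemma M_one_le {c : ℝ} (hc : 0 < c) (hc1 : c ≤ 1) : 1 ≤ c ^ (-(1:ℝ)/4) :=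
  Real.one_le_rpow_of_pos_of_le_one_of_nonpos hc hc1 (by norm_num)

lemma M_pow4 {c : ℝ} (hc : 0 < c) : c * (c ^ (-(1:ℝ)/4)) ^ (4:ℕ) = 1 := by
  rw [← Real.rpow_natCast (c ^ (-(1:ℝ)/4)) 4, ← Real.rpow_mul hc.le]
  norm_num
  rw [Real.rpow_neg_one]
  field_simp

lemma M_pow3 {c : ℝ} (hc : 0 < c) : (c ^ (-(1:ℝ)/4)) ^ (3:ℕ) = c ^ (-(3:ℝ)/4) := by
  rw [← Real.rpow_natCast (c ^ (-(1:ℝ)/4)) 3, ← Real.rpow_mul hc.le]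
  norm_num

-- lower bound for I2
lemma lower2 {c : ℝ} (hc : 0 < c) (hc1 : c ≤ 1) :
    Real.exp (-2) / 3 * c ^ (-(3:ℝ)/4) ≤
      ∫ x in Set.Ioi (0:ℝ), x ^ 2 * Real.exp (-c * (x ^ 2 - 1) ^ 2) := by
  set M := c ^ (-(1:ℝ)/4) with hMdef
  have hM : 0 < M := M_pos hc
  have hM4 : c * M ^ (4:ℕ) = 1 := M_pow4 hc
  have step1 : ∫ x in Set.Ioc (0:ℝ) M, x ^ 2 * Real.exp (-2)
      ≤ ∫ x in Set.Ioc (0:ℝ) M, x ^ 2 * Real.exp (-c * (x ^ 2 - 1) ^ 2) := by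
    apply setIntegral_mono_on
    · exact (Continuous.mul (by continuity) continuous_const).integrableOn_Ioc
    · exact (intOn c hc 2).mono_set Set.Ioc_subset_Ioi_self
    · exact measurableSet_Ioc
    · intro x hx
      have hx4 : x ^ 4 ≤ M ^ 4 := pow_le_pow_left₀ hx.1.le hx.2 4
      have hcx : c * x ^ 4 ≤ c * M ^ 4 := mul_le_mul_of_nonneg_left hx4 hc.le
      have : -2 ≤ -c * (x ^ 2 - 1) ^ 2 := by nlinarith [mul_nonneg hc.le (sq_nonneg x)]
      exact mul_le_mul_of_nonneg_left (Real.exp_le_exp.2 this) (sq_nonneg x)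
  have step2 : ∫ x in Set.Ioc (0:ℝ) M, x ^ 2 * Real.exp (-2)
      = Real.exp (-2) / 3 * c ^ (-(3:ℝ)/4) := by
    rw [MeasureTheory.integral_mul_const, ← intervalIntegral.integral_of_le hM.le,
      integral_pow]
    rw [← M_pow3 hc]
    norm_num
    rw [hMdef]
    ring
  have step3 : ∫ x in Set.Ioc (0:ℝ) M, x ^ 2 * Real.exp (-c * (x ^ 2 - 1) ^ 2)
      ≤ ∫ x in Set.Ioi (0:ℝ), x ^ 2 * Real.exp (-c * (x ^ 2 - 1) ^ 2) := by
    apply setIntegral_mono_set (intOn c hc 2)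
    · filter_upwards with x
      positivity
    · exact HasSubset.Subset.eventuallyLE Set.Ioc_subset_Ioi_self
  linarith [step1, step3, step2.symm.le, step2.le]
lemma intOn0 {c : ℝ} (hc : 0 < c) :
    IntegrableOn (fun x => Real.exp (-c * (x ^ 2 - 1) ^ 2)) (Set.Ioi (0:ℝ)) := by
  have := intOn c hc 0
  simpa using this

lemma lower0 {c : ℝ} (hc : 0 < c) (hc1 : c ≤ 1) :
    Real.exp (-2) * c ^ (-(1:ℝ)/4) ≤
      ∫ x in Set.Ioi (0:ℝ), Real.exp (-c * (x ^ 2 - 1) ^ 2) := by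
  set M := c ^ (-(1:ℝ)/4) with hMdef
  have hM : 0 < M := M_pos hc
  have hM4 : c * M ^ (4:ℕ) = 1 := M_pow4 hc
  have step1 : ∫ _x in Set.Ioc (0:ℝ) M, Real.exp (-2)
      ≤ ∫ x in Set.Ioc (0:ℝ) M, Real.exp (-c * (x ^ 2 - 1) ^ 2) := by
    apply setIntegral_mono_on
    · exact continuous_const.integrableOn_Ioc
    · exact (intOn0 hc).mono_set Set.Ioc_subset_Ioi_self
    · exact measurableSet_Ioc
    · intro x hx
      have hx4 : x ^ 4 ≤ M ^ 4 := pow_le_pow_left₀ hx.1.le hx.2 4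
      have hcx : c * x ^ 4 ≤ c * M ^ 4 := mul_le_mul_of_nonneg_left hx4 hc.le
      have : -2 ≤ -c * (x ^ 2 - 1) ^ 2 := by nlinarith [mul_nonneg hc.le (sq_nonneg x)]
      exact Real.exp_le_exp.2 this
  have step2 : ∫ _x in Set.Ioc (0:ℝ) M, Real.exp (-2) = Real.exp (-2) * M := by
    rw [setIntegral_const]
    simp [Real.volume_Ioc, ENNReal.toReal_ofReal hM.le, mul_comm, hM.le]
  have step3 : ∫ x in Set.Ioc (0:ℝ) M, Real.exp (-c * (x ^ 2 - 1) ^ 2)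
      ≤ ∫ x in Set.Ioi (0:ℝ), Real.exp (-c * (x ^ 2 - 1) ^ 2) := by
    apply setIntegral_mono_set (intOn0 hc)
    · filter_upwards with x
      positivity
    · exact HasSubset.Subset.eventuallyLE Set.Ioc_subset_Ioi_self
  calc Real.exp (-2) * M = ∫ _x in Set.Ioc (0:ℝ) M, Real.exp (-2) := step2.symm
    _ ≤ _ := step1
    _ ≤ _ := step3

lemma rpow_neg_int (x : ℝ) (hx : 0 < x) (n : ℕ) : x ^ (-(n:ℝ)) = (x ^ n)⁻¹ := by
  rw [Real.rpow_neg hx.le, Real.rpow_natCast]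

lemma upper2 {c : ℝ} (hc : 0 < c) (hc1 : c ≤ 1) :
    (∫ x in Set.Ioi (0:ℝ), x ^ 2 * Real.exp (-c * (x ^ 2 - 1) ^ 2))
      ≤ 4 * c ^ (-(3:ℝ)/4) := by
  set M := c ^ (-(1:ℝ)/4) with hMdef
  have hM : 0 < M := M_pos hc
  have hM1 : 1 ≤ M := M_one_le hc hc1
  have h2M : 0 < 2 * M := by linarith
  have hP : 0 < c ^ (-(3:ℝ)/4) := Real.rpow_pos_of_pos hc _
  have hintA : IntegrableOn (fun x => x ^ 2 * Real.exp (-c * (x ^ 2 - 1) ^ 2))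
      (Set.Ioc (0:ℝ) (2*M)) := (intOn c hc 2).mono_set Set.Ioc_subset_Ioi_self
  have hintB : IntegrableOn (fun x => x ^ 2 * Real.exp (-c * (x ^ 2 - 1) ^ 2))
      (Set.Ioi (2*M)) := (intOn c hc 2).mono_set (Set.Ioi_subset_Ioi h2M.le)
  have hsplit : (∫ x in Set.Ioi (0:ℝ), x ^ 2 * Real.exp (-c * (x ^ 2 - 1) ^ 2))
      = (∫ x in Set.Ioc (0:ℝ) (2*M), x ^ 2 * Real.exp (-c * (x ^ 2 - 1) ^ 2))
        + ∫ x in Set.Ioi (2*M), x ^ 2 * Real.exp (-c * (x ^ 2 - 1) ^ 2) := by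
    rw [← setIntegral_union (Set.Ioc_disjoint_Ioi le_rfl) measurableSet_Ioi hintA hintB,
      Set.Ioc_union_Ioi_eq_Ioi h2M.le]
  have boundA : (∫ x in Set.Ioc (0:ℝ) (2*M), x ^ 2 * Real.exp (-c * (x ^ 2 - 1) ^ 2))
      ≤ 8/3 * c ^ (-(3:ℝ)/4) := by
    have h1 : (∫ x in Set.Ioc (0:ℝ) (2*M), x ^ 2 * Real.exp (-c * (x ^ 2 - 1) ^ 2))
        ≤ ∫ x in Set.Ioc (0:ℝ) (2*M), x ^ 2 := by
      apply setIntegral_mono_on hintA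
        ((continuous_pow 2).integrableOn_Ioc) measurableSet_Ioc
      intro x hx
      have he : Real.exp (-c * (x ^ 2 - 1) ^ 2) ≤ 1 := by
        rw [show (1:ℝ) = Real.exp 0 by simp]
        apply Real.exp_le_exp.2
        nlinarith [mul_nonneg hc.le (sq_nonneg (x ^ 2 - 1))]
      nlinarith [sq_nonneg x, Real.exp_pos (-c * (x ^ 2 - 1) ^ 2)]
    have h2 : (∫ x in Set.Ioc (0:ℝ) (2*M), x ^ 2) = 8/3 * c ^ (-(3:ℝ)/4) := by
      rw [← intervalIntegral.integral_of_le h2M.le, integral_pow, ← M_pow3 hc]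
      norm_num
      rw [hMdef, neg_div]
      ring
    linarith
  have boundB : (∫ x in Set.Ioi (2*M), x ^ 2 * Real.exp (-c * (x ^ 2 - 1) ^ 2))
      ≤ 2/5 * c ^ (-(3:ℝ)/4) := by
    have h1 : (∫ x in Set.Ioi (2*M), x ^ 2 * Real.exp (-c * (x ^ 2 - 1) ^ 2))
        ≤ ∫ x in Set.Ioi (2*M), (64 / c ^ 2) * x ^ ((-6):ℝ) := by
      apply setIntegral_mono_on hintB
        (((integrableOn_Ioi_rpow_of_lt (by norm_num) h2M).const_mul _))
        measurableSet_Ioi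
      intro x hx
      have hx2 : 2 ≤ x := by
        have : 2 * M < x := hx
        nlinarith
      have hx0 : 0 < x := by linarith
      calc x ^ 2 * Real.exp (-c * (x ^ 2 - 1) ^ 2) ≤ x ^ 2 * (64 / (c ^ 2 * x ^ 8)) :=
            mul_le_mul_of_nonneg_left (tail_ptw hc hx2) (sq_nonneg x)
        _ = (64 / c ^ 2) * x ^ ((-6):ℝ) := by
            rw [show ((-6):ℝ) = -((6:ℕ):ℝ) by norm_num, rpow_neg_int x hx0 6]
            field_simp
    have h2 : (∫ x in Set.Ioi (2*M), (64 / c ^ 2) * x ^ ((-6):ℝ))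
        = 2/5 * c ^ (-(3:ℝ)/4) := by
      rw [MeasureTheory.integral_const_mul, integral_Ioi_rpow_of_lt (by norm_num) h2M]
      have hm5 : (2*M) ^ ((-6:ℝ)+1) = (1/32) * c ^ ((5:ℝ)/4) := by
        rw [show ((-6:ℝ)+1) = -(5:ℝ) by norm_num,
          Real.mul_rpow (by norm_num) hM.le, hMdef, ← Real.rpow_mul hc.le,
          show (-(5):ℝ) = -((5:ℕ):ℝ) by norm_num, rpow_neg_int 2 (by norm_num) 5]
        norm_num
      rw [hm5]
      have hsum : c ^ ((5:ℝ)/4) = c ^ (-(3:ℝ)/4) * c ^ (2:ℝ) := by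
        rw [← Real.rpow_add hc]; norm_num
      have hc2 : c ^ (2:ℝ) = c ^ (2:ℕ) := Real.rpow_natCast c 2
      rw [hsum, hc2]
      have : c ^ (2:ℕ) ≠ 0 := by positivity
      field_simp
      ring
    linarith
  rw [hsplit]
  linarith

lemma upper0 {c : ℝ} (hc : 0 < c) (hc1 : c ≤ 1) :
    (∫ x in Set.Ioi (0:ℝ), Real.exp (-c * (x ^ 2 - 1) ^ 2))
      ≤ 3 * c ^ (-(1:ℝ)/4) := by
  set M := c ^ (-(1:ℝ)/4) with hMdef
  have hM : 0 < M := M_pos hc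
  have hM1 : 1 ≤ M := M_one_le hc hc1
  have h2M : 0 < 2 * M := by linarith
  have hintA : IntegrableOn (fun x => Real.exp (-c * (x ^ 2 - 1) ^ 2))
      (Set.Ioc (0:ℝ) (2*M)) := (intOn0 hc).mono_set Set.Ioc_subset_Ioi_self
  have hintB : IntegrableOn (fun x => Real.exp (-c * (x ^ 2 - 1) ^ 2))
      (Set.Ioi (2*M)) := (intOn0 hc).mono_set (Set.Ioi_subset_Ioi h2M.le)
  have hsplit : (∫ x in Set.Ioi (0:ℝ), Real.exp (-c * (x ^ 2 - 1) ^ 2))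
      = (∫ x in Set.Ioc (0:ℝ) (2*M), Real.exp (-c * (x ^ 2 - 1) ^ 2))
        + ∫ x in Set.Ioi (2*M), Real.exp (-c * (x ^ 2 - 1) ^ 2) := by
    rw [← setIntegral_union (Set.Ioc_disjoint_Ioi le_rfl) measurableSet_Ioi hintA hintB,
      Set.Ioc_union_Ioi_eq_Ioi h2M.le]
  have boundA : (∫ x in Set.Ioc (0:ℝ) (2*M), Real.exp (-c * (x ^ 2 - 1) ^ 2))
      ≤ 2 * M := by
    have h1 : (∫ x in Set.Ioc (0:ℝ) (2*M), Real.exp (-c * (x ^ 2 - 1) ^ 2))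
        ≤ ∫ _x in Set.Ioc (0:ℝ) (2*M), (1:ℝ) := by
      apply setIntegral_mono_on hintA
        (continuous_const.integrableOn_Ioc) measurableSet_Ioc
      intro x _hx
      rw [show (1:ℝ) = Real.exp 0 by simp]
      apply Real.exp_le_exp.2
      nlinarith [mul_nonneg hc.le (sq_nonneg (x ^ 2 - 1))]
    have h2 : (∫ _x in Set.Ioc (0:ℝ) (2*M), (1:ℝ)) = 2 * M := by
      rw [setIntegral_const]
      simp [Real.volume_Ioc, ENNReal.toReal_ofReal h2M.le, hM.le]
    linarith
  have boundB : (∫ x in Set.Ioi (2*M), Real.exp (-c * (x ^ 2 - 1) ^ 2))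
      ≤ 1/14 * M := by
    have h1 : (∫ x in Set.Ioi (2*M), Real.exp (-c * (x ^ 2 - 1) ^ 2))
        ≤ ∫ x in Set.Ioi (2*M), (64 / c ^ 2) * x ^ ((-8):ℝ) := by
      apply setIntegral_mono_on hintB
        (((integrableOn_Ioi_rpow_of_lt (by norm_num) h2M).const_mul _))
        measurableSet_Ioi
      intro x hx
      have hx2 : 2 ≤ x := by
        have : 2 * M < x := hx
        nlinarith
      have hx0 : 0 < x := by linarith
      calc Real.exp (-c * (x ^ 2 - 1) ^ 2) ≤ 64 / (c ^ 2 * x ^ 8) := tail_ptw hc hx2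
        _ = (64 / c ^ 2) * x ^ ((-8):ℝ) := by
            rw [show ((-8):ℝ) = -((8:ℕ):ℝ) by norm_num, rpow_neg_int x hx0 8]
            field_simp
    have h2 : (∫ x in Set.Ioi (2*M), (64 / c ^ 2) * x ^ ((-8):ℝ)) = 1/14 * M := by
      rw [MeasureTheory.integral_const_mul, integral_Ioi_rpow_of_lt (by norm_num) h2M]
      have hm7 : (2*M) ^ ((-8:ℝ)+1) = (1/128) * c ^ ((7:ℝ)/4) := by
        rw [show ((-8:ℝ)+1) = -(7:ℝ) by norm_num,
          Real.mul_rpow (by norm_num) hM.le, hMdef, ← Real.rpow_mul hc.le,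
          show (-(7):ℝ) = -((7:ℕ):ℝ) by norm_num, rpow_neg_int 2 (by norm_num) 7]
        norm_num
      rw [hm7]
      have hsum : c ^ ((7:ℝ)/4) = c ^ (-(1:ℝ)/4) * c ^ (2:ℝ) := by
        rw [← Real.rpow_add hc]; norm_num
      have hc2 : c ^ (2:ℝ) = c ^ (2:ℕ) := Real.rpow_natCast c 2
      rw [hsum, hc2, ← hMdef]
      have : c ^ (2:ℕ) ≠ 0 := by positivity
      field_simp
      ring
    linarith
  rw [hsplit]
  linarith
end SMGR

/-- For
`R(c) = (∫₀^∞ x² e^{−c(x²−1)²} dx) / (∫₀^∞ e^{−c(x²−1)²} dx)` (`c > 0`), there are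
constants `0 < a ≤ A` such that `a c^{−1/2} ≤ R(c) ≤ A c^{−1/2}` for all `c ∈ (0, 1]`;
in particular `R(c) → ∞` at rate `c^{−1/2}` as `c → 0⁺`. -/
theorem second_moment_growth_rate :
    ∃ a A : ℝ, 0 < a ∧ a ≤ A ∧ ∀ c ∈ Set.Ioc (0 : ℝ) 1,
      a * c ^ (-(1 : ℝ) / 2) ≤
        (∫ x in Set.Ioi (0 : ℝ), x ^ 2 * Real.exp (-c * (x ^ 2 - 1) ^ 2)) /
          (∫ x in Set.Ioi (0 : ℝ), Real.exp (-c * (x ^ 2 - 1) ^ 2)) ∧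
      (∫ x in Set.Ioi (0 : ℝ), x ^ 2 * Real.exp (-c * (x ^ 2 - 1) ^ 2)) /
          (∫ x in Set.Ioi (0 : ℝ), Real.exp (-c * (x ^ 2 - 1) ^ 2)) ≤
        A * c ^ (-(1 : ℝ) / 2) := by
  refine ⟨Real.exp (-2) / 9, 4 * Real.exp 2, by positivity, ?_, ?_⟩
  · have h1 : Real.exp (-2) ≤ 1 := Real.exp_le_one_iff.2 (by norm_num)
    have h2 : (1:ℝ) ≤ Real.exp 2 := Real.one_le_exp (by norm_num)
    linarith
  intro c hc'
  obtain ⟨hc, hc1⟩ := hc'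
  set I2 := ∫ x in Set.Ioi (0 : ℝ), x ^ 2 * Real.exp (-c * (x ^ 2 - 1) ^ 2) with hI2
  set I0 := ∫ x in Set.Ioi (0 : ℝ), Real.exp (-c * (x ^ 2 - 1) ^ 2) with hI0
  have hl2 := SMGR.lower2 hc hc1
  have hu2 := SMGR.upper2 hc hc1
  have hl0 := SMGR.lower0 hc hc1
  have hu0 := SMGR.upper0 hc hc1
  have hM : 0 < c ^ (-(1:ℝ)/4) := Real.rpow_pos_of_pos hc _
  have hI0pos : 0 < I0 := lt_of_lt_of_le (by positivity) hl0
  have hadd : c ^ (-(1:ℝ)/2) * c ^ (-(1:ℝ)/4) = c ^ (-(3:ℝ)/4) := by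
    rw [← Real.rpow_add hc]; norm_num
  have hhalf : 0 < c ^ (-(1:ℝ)/2) := Real.rpow_pos_of_pos hc _
  constructor
  · rw [le_div_iff₀ hI0pos]
    calc Real.exp (-2) / 9 * c ^ (-(1:ℝ)/2) * I0
        ≤ Real.exp (-2) / 9 * c ^ (-(1:ℝ)/2) * (3 * c ^ (-(1:ℝ)/4)) := by
          apply mul_le_mul_of_nonneg_left hu0 (by positivity)
      _ = Real.exp (-2) / 3 * (c ^ (-(1:ℝ)/2) * c ^ (-(1:ℝ)/4)) := by ring
      _ = Real.exp (-2) / 3 * c ^ (-(3:ℝ)/4) := by rw [hadd]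
      _ ≤ I2 := hl2
  · rw [div_le_iff₀ hI0pos]
    calc I2 ≤ 4 * c ^ (-(3:ℝ)/4) := hu2
      _ = 4 * Real.exp 2 * c ^ (-(1:ℝ)/2) * (Real.exp (-2) * c ^ (-(1:ℝ)/4)) := by
          rw [← hadd]
          rw [show (4:ℝ) * Real.exp 2 * c ^ (-(1:ℝ)/2) * (Real.exp (-2) * c ^ (-(1:ℝ)/4))
            = 4 * (Real.exp 2 * Real.exp (-2)) * (c ^ (-(1:ℝ)/2) * c ^ (-(1:ℝ)/4)) by ring,
            show Real.exp 2 * Real.exp (-2) = 1 by rw [← Real.exp_add]; simp]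
          ring
      _ ≤ 4 * Real.exp 2 * c ^ (-(1:ℝ)/2) * I0 := by
          apply mul_le_mul_of_nonneg_left hl0 (by positivity)
end

section
/- Let d ≥ 1, σ > 0, and V(x) = x⁴/4 − x²/2. For each even integer N ≥ 2 let ρ = N²/(4π²) and let (X_j^{(N)}), indexed by j with j_i ∈ {−N/2,…,N/2−1}, be i.i.d. real random variables with probability density proportional to exp(−2V(x)/(σ² ρ^{d/2})). Then for every continuous function φ : 𝕋^d → ℝ, the pairing ⟨u_N, φ⟩ := (2π/N)^d ∑_j X_j^{(N)} φ(x_j), where x_j = (2π/N)j, converges to 0 in probability as N → ∞. -/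
open MeasureTheory ProbabilityTheory Filter

/-- The grid of indices `j = (j₁,…,j_d)` with `jᵢ ∈ {−N/2, …, N/2 − 1}`. -/
noncomputable def dftGrid (d N : ℕ) : Finset (Fin d → ℤ) :=
  Fintype.piFinset fun _ : Fin d => Finset.Icc (-((N : ℤ) / 2)) ((N : ℤ) / 2 - 1)

/-- The double-well potential `V(x) = x⁴/4 − x²/2`. -/
noncomputable def doubleWell (x : ℝ) : ℝ := x ^ 4 / 4 - x ^ 2 / 2

/-- `ρ = N²/(4π²)`, the inverse squared grid spacing. -/
noncomputable def rhoGrid (N : ℕ) : ℝ := (N : ℝ) ^ 2 / (4 * Real.pi ^ 2)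

/-- The unnormalized stationary density `exp(−2V(x)/(σ²ρ^{d/2}))` of the decoupled
stochastic Allen–Cahn equation at one grid point. -/
noncomputable def stationaryDensity (d N : ℕ) (σ : ℝ) (x : ℝ) : ℝ :=
  Real.exp (-2 * doubleWell x / (σ ^ 2 * rhoGrid N ^ ((d : ℝ) / 2)))

/- ## Auxiliary analytic lemmas -/

/-- The one-point unnormalized density with temperature parameter `T`. -/
noncomputable def gdens (T x : ℝ) : ℝ := Real.exp (-2 * doubleWell x / T)

lemma stationary_eq_gdens (d N : ℕ) (σ : ℝ) :
    stationaryDensity d N σ = gdens (σ ^ 2 * rhoGrid N ^ ((d : ℝ) / 2)) := rfl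

lemma gdens_continuous (T : ℝ) : Continuous (gdens T) := by
  unfold gdens doubleWell
  fun_prop

lemma gdens_pos (T x : ℝ) : 0 < gdens T x := Real.exp_pos _

lemma gdens_even (T x : ℝ) : gdens T (-x) = gdens T x := by
  unfold gdens doubleWell; congr 1; ring

lemma gdens_le {T : ℝ} (hT : 1 ≤ T) (x : ℝ) :
    gdens T x ≤ Real.exp 2 * Real.exp (-(1 / T) * x ^ 2) := by
  have hT0 : (0 : ℝ) < T := lt_of_lt_of_le one_pos hT
  rw [← Real.exp_add]
  apply Real.exp_le_exp.2
  have h1 : -2 * doubleWell x ≤ 2 - x ^ 2 := by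
    unfold doubleWell; nlinarith [sq_nonneg (x ^ 2 - 2)]
  have h2 : -2 * doubleWell x / T ≤ (2 - x ^ 2) / T :=
    div_le_div_of_nonneg_right h1 hT0.le
  have h3 : (2 - x ^ 2) / T = 2 / T - x ^ 2 / T := by ring
  have h4 : 2 / T ≤ 2 := div_le_self (by norm_num) hT
  have h5 : -(1 / T) * x ^ 2 = -(x ^ 2 / T) := by ring
  rw [h5]
  linarith [h2, h3.le]

lemma quart_bound {T : ℝ} (hT : 1 ≤ T) (x : ℝ) :
    gdens T x ≤ Real.exp 1 * Real.exp (-(x ^ 4) / (4 * T)) := by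
  have hT0 : (0 : ℝ) < T := lt_of_lt_of_le one_pos hT
  rw [← Real.exp_add]
  apply Real.exp_le_exp.2
  have h1 : -2 * doubleWell x ≤ 1 - x ^ 4 / 4 := by
    unfold doubleWell; nlinarith [sq_nonneg (x ^ 2 - 2)]
  have h2 : -2 * doubleWell x / T ≤ (1 - x ^ 4 / 4) / T :=
    div_le_div_of_nonneg_right h1 hT0.le
  have h3 : (1 - x ^ 4 / 4) / T = 1 / T - x ^ 4 / (4 * T) := by ring
  have h4 : 1 / T ≤ 1 := div_le_self (by norm_num) hT
  have h5 : -(x ^ 4) / (4 * T) = -(x ^ 4 / (4 * T)) := by ring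
  rw [h5]
  linarith [h2, h3.le]

lemma rpow_two' (x : ℝ) : x ^ (2 : ℝ) = x ^ (2 : ℕ) := by
  rw [show (2 : ℝ) = ((2 : ℕ) : ℝ) by norm_num, Real.rpow_natCast]

lemma integrable_sq_gauss {b : ℝ} (hb : 0 < b) :
    Integrable fun x : ℝ => x ^ 2 * Real.exp (-b * x ^ 2) := by
  have h := integrable_rpow_mul_exp_neg_mul_sq hb (s := 2) (by norm_num)
  simpa [rpow_two'] using h

/-- `∫ y² exp(−y⁴/4) dy`. -/
noncomputable def quartC : ℝ := ∫ y : ℝ, y ^ 2 * Real.exp (-(y ^ 4) / 4)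

lemma quartC_nonneg : 0 ≤ quartC :=
  integral_nonneg fun y => by positivity

lemma integrable_quart : Integrable fun y : ℝ => y ^ 2 * Real.exp (-(y ^ 4) / 4) := by
  refine Integrable.mono' (((integrable_sq_gauss one_pos).const_mul (Real.exp 1)))
    ?_ (Filter.Eventually.of_forall fun y => ?_)
  · exact ((continuous_pow 2).mul (by fun_prop : Continuous fun y : ℝ =>
      Real.exp (-(y ^ 4) / 4))).aestronglyMeasurable
  · have h1 : Real.exp (-(y ^ 4) / 4) ≤ Real.exp 1 * Real.exp (-1 * y ^ 2) := by
      rw [← Real.exp_add]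
      apply Real.exp_le_exp.2
      nlinarith [sq_nonneg (y ^ 2 - 2)]
    have h0 : (0 : ℝ) ≤ y ^ 2 * Real.exp (-(y ^ 4) / 4) := by positivity
    rw [Real.norm_eq_abs, abs_of_nonneg h0]
    calc y ^ 2 * Real.exp (-(y ^ 4) / 4) ≤ y ^ 2 * (Real.exp 1 * Real.exp (-1 * y ^ 2)) := by
          gcongr
      _ = Real.exp 1 * (y ^ 2 * Real.exp (-1 * y ^ 2)) := by ring

lemma gdens_integrable {T : ℝ} (hT : 1 ≤ T) : Integrable (gdens T) := by
  have hT0 : (0 : ℝ) < T := lt_of_lt_of_le one_pos hT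
  refine Integrable.mono' ((integrable_exp_neg_mul_sq (show (0:ℝ) < 1/T by positivity)).const_mul
    (Real.exp 2)) (gdens_continuous T).aestronglyMeasurable
    (Filter.Eventually.of_forall fun x => ?_)
  rw [Real.norm_eq_abs, abs_of_pos (gdens_pos T x)]
  exact gdens_le hT x

lemma x_gdens_integrable {T : ℝ} (hT : 1 ≤ T) : Integrable fun x => x * gdens T x := by
  have hT0 : (0 : ℝ) < T := lt_of_lt_of_le one_pos hT
  have hb : (0:ℝ) < 1/T := by positivity
  refine Integrable.mono' (((integrable_mul_exp_neg_mul_sq hb).abs).const_mul (Real.exp 2))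
    (continuous_id.mul (gdens_continuous T)).aestronglyMeasurable
    (Filter.Eventually.of_forall fun x => ?_)
  rw [Real.norm_eq_abs, abs_mul, abs_of_pos (gdens_pos T x), abs_mul,
    abs_of_pos (Real.exp_pos _)]
  calc |x| * gdens T x ≤ |x| * (Real.exp 2 * Real.exp (-(1/T) * x ^ 2)) := by
        gcongr; exact gdens_le hT x
    _ = Real.exp 2 * (|x| * Real.exp (-(1/T) * x ^ 2)) := by ring

lemma x2_gdens_integrable {T : ℝ} (hT : 1 ≤ T) : Integrable fun x => x ^ 2 * gdens T x := by
  have hT0 : (0 : ℝ) < T := lt_of_lt_of_le one_pos hT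
  have hb : (0:ℝ) < 1/T := by positivity
  refine Integrable.mono' ((integrable_sq_gauss hb).const_mul (Real.exp 2))
    ((continuous_pow 2).mul (gdens_continuous T)).aestronglyMeasurable
    (Filter.Eventually.of_forall fun x => ?_)
  have h0 : (0:ℝ) ≤ x ^ 2 * gdens T x := mul_nonneg (sq_nonneg x) (gdens_pos T x).le
  rw [Real.norm_eq_abs, abs_of_nonneg h0]
  calc x ^ 2 * gdens T x ≤ x ^ 2 * (Real.exp 2 * Real.exp (-(1/T) * x ^ 2)) := by
        gcongr; exact gdens_le hT x
    _ = Real.exp 2 * (x ^ 2 * Real.exp (-(1/T) * x ^ 2)) := by ring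

lemma gdens_integral_ge_two {T : ℝ} (hT : 1 ≤ T) : 2 ≤ ∫ x, gdens T x := by
  have hT0 : (0 : ℝ) < T := lt_of_lt_of_le one_pos hT
  have h1 : ∫ x in Set.Icc (-1 : ℝ) 1, (1 : ℝ) ≤ ∫ x in Set.Icc (-1 : ℝ) 1, gdens T x := by
    refine setIntegral_mono_on (integrableOn_const (by simp [Real.volume_Icc])) 
      ((gdens_integrable hT).integrableOn) measurableSet_Icc fun x hx => ?_
    apply Real.one_le_exp
    apply div_nonneg _ hT0.le
    obtain ⟨hx1, hx2⟩ := hx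
    unfold doubleWell
    have hsq : x ^ 2 ≤ 1 := by nlinarith
    nlinarith [mul_nonneg (sq_nonneg x) (sub_nonneg.2 hsq)]
  have h2 : ∫ x in Set.Icc (-1 : ℝ) 1, (1 : ℝ) = 2 := by
    simp [Real.volume_Icc]
    norm_num
  have h3 : ∫ x in Set.Icc (-1 : ℝ) 1, gdens T x ≤ ∫ x, gdens T x :=
    setIntegral_le_integral (gdens_integrable hT)
      (Filter.Eventually.of_forall fun x => (gdens_pos T x).le)
  linarith
lemma x_gdens_integral_zero (T : ℝ) : ∫ x, x * gdens T x = 0 := by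
  have h := MeasureTheory.integral_neg_eq_self (fun y => y * gdens T y) volume
  have h2 : ∀ x : ℝ, -x * gdens T (-x) = -(x * gdens T x) := by
    intro x; rw [gdens_even]; ring
  simp only [h2] at h
  rw [integral_neg] at h
  linarith

lemma x2_gdens_integral_le {T : ℝ} (hT : 1 ≤ T) :
    ∫ x, x ^ 2 * gdens T x ≤ Real.exp 1 * quartC * T ^ ((3:ℝ)/4) := by
  have hT0 : (0 : ℝ) < T := lt_of_lt_of_le one_pos hT
  set c : ℝ := T ^ ((1:ℝ)/4) with hc_def
  have hc : 0 < c := Real.rpow_pos_of_pos hT0 _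
  have hc4 : c ^ 4 = T := by
    rw [hc_def, ← Real.rpow_natCast (T ^ ((1:ℝ)/4)) 4, ← Real.rpow_mul hT0.le]
    norm_num
  have hc2 : c ^ 2 = T ^ ((1:ℝ)/2) := by
    rw [hc_def, ← Real.rpow_natCast (T ^ ((1:ℝ)/4)) 2, ← Real.rpow_mul hT0.le]
    norm_num
  have hT12 : (0:ℝ) < T ^ ((1:ℝ)/2) := Real.rpow_pos_of_pos hT0 _
  -- the rescaled representation
  have hrep : ∀ x : ℝ, x ^ 2 * Real.exp (-(x ^ 4) / (4 * T)) =
      T ^ ((1:ℝ)/2) * ((fun y => y ^ 2 * Real.exp (-(y ^ 4) / 4)) (c⁻¹ * x)) := by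
    intro x
    simp only
    have h1 : (c⁻¹ * x) ^ 2 = x ^ 2 / T ^ ((1:ℝ)/2) := by
      rw [mul_pow, ← hc2]; field_simp
    have h2 : (c⁻¹ * x) ^ 4 = x ^ 4 / T := by
      rw [mul_pow, ← hc4]; field_simp
    rw [h1, h2]
    have h3 : -(x ^ 4 / T) / 4 = -(x ^ 4) / (4 * T) := by ring
    rw [h3]
    field_simp
  have hquart_int : Integrable fun x : ℝ => x ^ 2 * Real.exp (-(x ^ 4) / (4 * T)) := by
    have : Integrable fun x : ℝ =>
        T ^ ((1:ℝ)/2) * ((fun y => y ^ 2 * Real.exp (-(y ^ 4) / 4)) (c⁻¹ * x)) :=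
      (integrable_quart.comp_mul_left' (inv_ne_zero hc.ne')).const_mul _
    exact this.congr (Filter.Eventually.of_forall fun x => (hrep x).symm)
  have hint : ∫ x, x ^ 2 * Real.exp (-(x ^ 4) / (4 * T)) = T ^ ((3:ℝ)/4) * quartC := by
    calc ∫ x, x ^ 2 * Real.exp (-(x ^ 4) / (4 * T))
        = ∫ x, T ^ ((1:ℝ)/2) * ((fun y => y ^ 2 * Real.exp (-(y ^ 4) / 4)) (c⁻¹ * x)) := by
          exact integral_congr_ae (Filter.Eventually.of_forall hrep)
      _ = T ^ ((1:ℝ)/2) * ∫ x, (fun y => y ^ 2 * Real.exp (-(y ^ 4) / 4)) (c⁻¹ * x) :=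
          integral_const_mul _ _
      _ = T ^ ((1:ℝ)/2) * (|c⁻¹⁻¹| • quartC) := by
          rw [MeasureTheory.Measure.integral_comp_mul_left
            (fun y => y ^ 2 * Real.exp (-(y ^ 4) / 4)) c⁻¹]
          rfl
      _ = T ^ ((1:ℝ)/2) * (c * quartC) := by rw [inv_inv, abs_of_pos hc]; rfl
      _ = T ^ ((3:ℝ)/4) * quartC := by
          rw [hc_def, ← mul_assoc, ← Real.rpow_add hT0]
          norm_num
  calc ∫ x, x ^ 2 * gdens T x
      ≤ ∫ x, Real.exp 1 * (x ^ 2 * Real.exp (-(x ^ 4) / (4 * T))) := by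
        refine integral_mono (x2_gdens_integrable hT) (hquart_int.const_mul _) fun x => ?_
        simp only
        calc x ^ 2 * gdens T x ≤ x ^ 2 * (Real.exp 1 * Real.exp (-(x ^ 4) / (4 * T))) := by
              gcongr; exact quart_bound hT x
          _ = Real.exp 1 * (x ^ 2 * Real.exp (-(x ^ 4) / (4 * T))) := by ring
    _ = Real.exp 1 * (T ^ ((3:ℝ)/4) * quartC) := by rw [integral_const_mul, hint]
    _ = Real.exp 1 * quartC * T ^ ((3:ℝ)/4) := by ring
/-- The normalized stationary measure at one grid point. -/
noncomputable def nuT (T : ℝ) : Measure ℝ :=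
  volume.withDensity (fun x => ENNReal.ofReal (gdens T x / ∫ y, gdens T y))

lemma nuT_integral {T : ℝ} (hT : 1 ≤ T) (f : ℝ → ℝ) :
    ∫ x, f x ∂(nuT T) = ∫ x, (gdens T x / ∫ y, gdens T y) * f x := by
  have hZ : (0:ℝ) < ∫ y, gdens T y := lt_of_lt_of_le two_pos (gdens_integral_ge_two hT)
  have hnn : ∀ x, 0 ≤ gdens T x / ∫ y, gdens T y :=
    fun x => div_nonneg (gdens_pos T x).le hZ.le
  have hmeas : Measurable fun x => (gdens T x / ∫ y, gdens T y).toNNReal :=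
    ((gdens_continuous T).measurable.div_const _).real_toNNReal
  have heq : (fun x => ENNReal.ofReal (gdens T x / ∫ y, gdens T y)) =
      fun x => ((gdens T x / ∫ y, gdens T y).toNNReal : ENNReal) := rfl
  rw [nuT, heq, integral_withDensity_eq_integral_smul hmeas]
  refine integral_congr_ae (Filter.Eventually.of_forall fun x => ?_)
  simp [NNReal.smul_def, Real.coe_toNNReal _ (hnn x)]

lemma nuT_integrable_sq {T : ℝ} (hT : 1 ≤ T) :
    Integrable (fun x : ℝ => x ^ 2) (nuT T) := by
  have hZ : (0:ℝ) < ∫ y, gdens T y := lt_of_lt_of_le two_pos (gdens_integral_ge_two hT)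
  have hmeas : Measurable fun x => ENNReal.ofReal (gdens T x / ∫ y, gdens T y) :=
    ((gdens_continuous T).measurable.div_const _).ennreal_ofReal
  rw [nuT, integrable_withDensity_iff hmeas
    (Filter.Eventually.of_forall fun x => ENNReal.ofReal_lt_top)]
  have : ∀ x : ℝ, x ^ 2 * (ENNReal.ofReal (gdens T x / ∫ y, gdens T y)).toReal =
      (x ^ 2 * gdens T x) * (∫ y, gdens T y)⁻¹ := by
    intro x
    rw [ENNReal.toReal_ofReal (div_nonneg (gdens_pos T x).le hZ.le)]
    ring
  simp only [this]
  exact (x2_gdens_integrable hT).mul_const _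

lemma nuT_memℒp_id {T : ℝ} (hT : 1 ≤ T) : MemLp (id : ℝ → ℝ) 2 (nuT T) :=
  (memLp_two_iff_integrable_sq aestronglyMeasurable_id).2 (by
    simpa using nuT_integrable_sq hT)

lemma nuT_mean_zero {T : ℝ} (hT : 1 ≤ T) : ∫ x, x ∂(nuT T) = 0 := by
  rw [nuT_integral hT]
  have : ∀ x : ℝ, (gdens T x / ∫ y, gdens T y) * x = (x * gdens T x) * (∫ y, gdens T y)⁻¹ := by
    intro x; ring
  simp only [this]
  rw [integral_mul_const, x_gdens_integral_zero]
  simp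

lemma nuT_second_moment {T : ℝ} (hT : 1 ≤ T) :
    ∫ x, x ^ 2 ∂(nuT T) ≤ Real.exp 1 * quartC * T ^ ((3:ℝ)/4) / 2 := by
  have hZ : (2:ℝ) ≤ ∫ y, gdens T y := gdens_integral_ge_two hT
  have hZ0 : (0:ℝ) < ∫ y, gdens T y := lt_of_lt_of_le two_pos hZ
  rw [nuT_integral hT]
  have : ∀ x : ℝ, (gdens T x / ∫ y, gdens T y) * x ^ 2 =
      (x ^ 2 * gdens T x) * (∫ y, gdens T y)⁻¹ := by intro x; ring
  simp only [this]
  rw [integral_mul_const]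
  have hA : (0:ℝ) ≤ ∫ x, x ^ 2 * gdens T x :=
    integral_nonneg fun x => mul_nonneg (sq_nonneg x) (gdens_pos T x).le
  have h1 : (∫ x, x ^ 2 * gdens T x) * (∫ y, gdens T y)⁻¹ ≤
      (Real.exp 1 * quartC * T ^ ((3:ℝ)/4)) * (∫ y, gdens T y)⁻¹ := by
    exact mul_le_mul_of_nonneg_right (x2_gdens_integral_le hT) (inv_nonneg.2 hZ0.le)
  have h2 : (Real.exp 1 * quartC * T ^ ((3:ℝ)/4)) * (∫ y, gdens T y)⁻¹ ≤
      Real.exp 1 * quartC * T ^ ((3:ℝ)/4) / 2 := by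
    rw [div_eq_mul_inv]
    exact mul_le_mul_of_nonneg_left (inv_anti₀ two_pos hZ)
      (mul_nonneg (mul_nonneg (Real.exp_pos 1).le quartC_nonneg)
        (Real.rpow_nonneg (lt_of_lt_of_le one_pos hT).le _))
  linarith
lemma dftGrid_card (d N : ℕ) (hN : Even N) : (dftGrid d N).card = N ^ d := by
  unfold dftGrid
  rw [Fintype.card_piFinset]
  have h2 : (2:ℤ) * ((N:ℤ) / 2) = (N:ℤ) :=
    Int.two_mul_ediv_two_of_even ((Int.even_coe_nat N).2 hN)
  have hcard : (Finset.Icc (-((N : ℤ) / 2)) ((N : ℤ) / 2 - 1)).card = N := by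
    rw [Int.card_Icc]
    have : ((N:ℤ) / 2 - 1 + 1 - -((N:ℤ) / 2)) = (N:ℤ) := by linarith
    rw [this, Int.toNat_natCast]
  simp [hcard]

lemma grid_point_mem_box {d N : ℕ} (hN : Even N) (hN2 : 2 ≤ N) {j : Fin d → ℤ}
    (hj : j ∈ dftGrid d N) :
    (fun i => 2 * Real.pi / N * ((j i : ℤ) : ℝ)) ∈
      Set.Icc (fun _ : Fin d => -Real.pi) (fun _ : Fin d => Real.pi) := by
  have hN0 : (0:ℝ) < (N:ℝ) := by exact_mod_cast lt_of_lt_of_le two_pos hN2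
  have h2 : (2:ℤ) * ((N:ℤ) / 2) = (N:ℤ) :=
    Int.two_mul_ediv_two_of_even ((Int.even_coe_nat N).2 hN)
  have hq : (((N:ℤ) / 2 : ℤ) : ℝ) = (N:ℝ) / 2 := by
    have h2' : (2:ℝ) * (((N:ℤ) / 2 : ℤ) : ℝ) = (N:ℝ) := by
      exact_mod_cast congrArg (fun z : ℤ => (z : ℝ)) h2
    linarith
  have hfrac : (0:ℝ) < 2 * Real.pi / N := by positivity
  have hπ : 2 * Real.pi / N * ((N:ℝ)/2) = Real.pi := by field_simp
  rw [Set.mem_Icc]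
  constructor <;> rw [Pi.le_def] <;> intro i <;>
    obtain ⟨hlo, hhi⟩ := Finset.mem_Icc.1 (Fintype.mem_piFinset.1 hj i)
  · have h1 : -((N:ℝ)/2) ≤ ((j i : ℤ) : ℝ) := by
      rw [← hq]; exact_mod_cast hlo
    have := mul_le_mul_of_nonneg_left h1 hfrac.le
    calc -Real.pi = 2 * Real.pi / N * (-((N:ℝ)/2)) := by rw [mul_neg, hπ]
      _ ≤ 2 * Real.pi / N * ((j i : ℤ) : ℝ) := this
  · have h1 : ((j i : ℤ) : ℝ) ≤ (N:ℝ)/2 := by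
      have : ((j i : ℤ) : ℝ) ≤ (((N:ℤ)/2 : ℤ) : ℝ) - 1 := by exact_mod_cast hhi
      rw [hq] at this; linarith
    have := mul_le_mul_of_nonneg_left h1 hfrac.le
    calc 2 * Real.pi / N * ((j i : ℤ) : ℝ) ≤ 2 * Real.pi / N * ((N:ℝ)/2) := this
      _ = Real.pi := hπ

lemma T_tendsto (d : ℕ) (hd : 1 ≤ d) (σ : ℝ) (hσ : 0 < σ) :
    Tendsto (fun N : ℕ => σ ^ 2 * rhoGrid N ^ ((d:ℝ)/2)) atTop atTop := by
  have h1 : Tendsto (fun N : ℕ => rhoGrid N) atTop atTop := by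
    unfold rhoGrid
    apply Tendsto.atTop_div_const (by positivity : (0:ℝ) < 4 * Real.pi ^ 2)
    exact (tendsto_pow_atTop two_ne_zero).comp tendsto_natCast_atTop_atTop
  have h2 : Tendsto (fun N : ℕ => rhoGrid N ^ ((d:ℝ)/2)) atTop atTop := by
    apply (tendsto_rpow_atTop (by positivity : (0:ℝ) < (d:ℝ)/2)).comp h1
  exact h2.const_mul_atTop (by positivity)

lemma arith_bound (d N : ℕ) (hd : 1 ≤ d) (hN2 : 2 ≤ N) (σ C : ℝ) (hσ : 0 < σ) (hC : 0 ≤ C) :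
    ((N:ℝ) ^ d) * (((2 * Real.pi / N) ^ d) ^ 2 * C ^ 2 *
      (Real.exp 1 * quartC * (σ ^ 2 * rhoGrid N ^ ((d:ℝ)/2)) ^ ((3:ℝ)/4) / 2)) ≤
    ((2 * Real.pi) ^ (2*d) * C ^ 2 * (Real.exp 1 * quartC / 2) * (σ ^ 2) ^ ((3:ℝ)/4)) *
      (N:ℝ) ^ (-(d:ℝ)/4) := by
  have hn : (0:ℝ) < (N:ℝ) := by exact_mod_cast lt_of_lt_of_le two_pos hN2
  have hd0 : (0:ℝ) ≤ (d:ℝ) := Nat.cast_nonneg d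
  have hρ0 : 0 ≤ rhoGrid N := by unfold rhoGrid; positivity
  have hρ : rhoGrid N ≤ (N:ℝ) ^ 2 := by
    unfold rhoGrid
    apply div_le_self (sq_nonneg _)
    nlinarith [Real.pi_gt_three]
  have hpow : ((N:ℝ) ^ 2 : ℝ) ^ ((d:ℝ)/2) = (N:ℝ) ^ ((d:ℝ)) := by
    rw [← Real.rpow_natCast (N:ℝ) 2, ← Real.rpow_mul hn.le]
    congr 1
    push_cast
    ring
  have hT_le : σ ^ 2 * rhoGrid N ^ ((d:ℝ)/2) ≤ σ ^ 2 * (N:ℝ) ^ ((d:ℝ)) := by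
    rw [← hpow]
    exact mul_le_mul_of_nonneg_left
      (Real.rpow_le_rpow hρ0 hρ (by positivity)) (sq_nonneg σ)
  have hT0 : 0 ≤ σ ^ 2 * rhoGrid N ^ ((d:ℝ)/2) :=
    mul_nonneg (sq_nonneg σ) (Real.rpow_nonneg hρ0 _)
  have hT34 : (σ ^ 2 * rhoGrid N ^ ((d:ℝ)/2)) ^ ((3:ℝ)/4) ≤
      (σ ^ 2) ^ ((3:ℝ)/4) * (N:ℝ) ^ ((d:ℝ) * (3/4)) := by
    calc (σ ^ 2 * rhoGrid N ^ ((d:ℝ)/2)) ^ ((3:ℝ)/4)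
        ≤ (σ ^ 2 * (N:ℝ) ^ ((d:ℝ))) ^ ((3:ℝ)/4) :=
          Real.rpow_le_rpow hT0 hT_le (by norm_num)
      _ = (σ ^ 2) ^ ((3:ℝ)/4) * ((N:ℝ) ^ ((d:ℝ))) ^ ((3:ℝ)/4) :=
          Real.mul_rpow (sq_nonneg σ) (Real.rpow_nonneg hn.le _)
      _ = (σ ^ 2) ^ ((3:ℝ)/4) * (N:ℝ) ^ ((d:ℝ) * (3/4)) := by
          rw [← Real.rpow_mul hn.le]
  have hpre : (0:ℝ) ≤ (N:ℝ) ^ d * ((2 * Real.pi / (N:ℝ)) ^ d) ^ 2 * C ^ 2 *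
      (Real.exp 1 * quartC / 2) := by
    have := quartC_nonneg
    positivity
  have hq : (N:ℝ) ^ ((d:ℝ) * (3/4)) = (N:ℝ) ^ (-(d:ℝ)/4) * (N:ℝ) ^ (d:ℕ) := by
    rw [← Real.rpow_natCast (N:ℝ) d, ← Real.rpow_add hn]
    congr 1; ring
  calc ((N:ℝ) ^ d) * (((2 * Real.pi / N) ^ d) ^ 2 * C ^ 2 *
      (Real.exp 1 * quartC * (σ ^ 2 * rhoGrid N ^ ((d:ℝ)/2)) ^ ((3:ℝ)/4) / 2))
      = ((N:ℝ) ^ d * ((2 * Real.pi / (N:ℝ)) ^ d) ^ 2 * C ^ 2 * (Real.exp 1 * quartC / 2)) *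
        (σ ^ 2 * rhoGrid N ^ ((d:ℝ)/2)) ^ ((3:ℝ)/4) := by ring
    _ ≤ ((N:ℝ) ^ d * ((2 * Real.pi / (N:ℝ)) ^ d) ^ 2 * C ^ 2 * (Real.exp 1 * quartC / 2)) *
        ((σ ^ 2) ^ ((3:ℝ)/4) * (N:ℝ) ^ ((d:ℝ) * (3/4))) :=
        mul_le_mul_of_nonneg_left hT34 hpre
    _ = ((2 * Real.pi) ^ (2*d) * C ^ 2 * (Real.exp 1 * quartC / 2) * (σ ^ 2) ^ ((3:ℝ)/4)) *
        (N:ℝ) ^ (-(d:ℝ)/4) := by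
        rw [hq, div_pow, pow_mul]
        have hnd : ((N:ℝ) ^ (d:ℕ)) ≠ 0 := by positivity
        field_simp
        ring_nf
        rw [show (4:ℝ) ^ d = 2 ^ (d * 2) by
          rw [show (4:ℝ) = 2 ^ 2 by norm_num, ← pow_mul, mul_comm]]
lemma cheb_bound {Ω : Type*} [MeasurableSpace Ω] (μ : Measure Ω) [IsProbabilityMeasure μ]
    (d N : ℕ) (hd : 1 ≤ d) (σ : ℝ) (hσ : 0 < σ)
    (X : dftGrid d N → Ω → ℝ) (hmeas : ∀ j, Measurable (X j))
    (hindep : iIndepFun X μ)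
    (hdist : ∀ j : dftGrid d N, μ.map (X j) = volume.withDensity (fun x => ENNReal.ofReal
        (stationaryDensity d N σ x / ∫ y : ℝ, stationaryDensity d N σ y)))
    (hN : Even N) (hN2 : 2 ≤ N)
    (hT : 1 ≤ σ ^ 2 * rhoGrid N ^ ((d:ℝ)/2))
    (φ : (Fin d → ℝ) → ℝ) (hφ : Continuous φ)
    (C : ℝ) (hC0 : 0 ≤ C)
    (hC : ∀ x ∈ Set.Icc (fun _ : Fin d => -Real.pi) (fun _ : Fin d => Real.pi), ‖φ x‖ ≤ C)
    (ε : ℝ) (hε : 0 < ε) :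
    μ {ω | ε ≤ dist ((2 * Real.pi / N) ^ d *
        ∑ j : dftGrid d N, X j ω * φ (fun i => 2 * Real.pi / N * ((j : Fin d → ℤ) i : ℝ))) 0}
      ≤ ENNReal.ofReal ((((2 * Real.pi) ^ (2*d) * C ^ 2 * (Real.exp 1 * quartC / 2) *
          (σ ^ 2) ^ ((3:ℝ)/4)) * (N:ℝ) ^ (-(d:ℝ)/4)) / ε ^ 2) := by
  set T : ℝ := σ ^ 2 * rhoGrid N ^ ((d:ℝ)/2) with hT_def
  set M : ℝ := Real.exp 1 * quartC * T ^ ((3:ℝ)/4) / 2 with hM_def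
  have hT0 : (0:ℝ) < T := lt_of_lt_of_le one_pos hT
  have hM0 : 0 ≤ M := by
    rw [hM_def]
    have := quartC_nonneg
    have := Real.rpow_nonneg hT0.le ((3:ℝ)/4)
    positivity
  -- per-coordinate facts
  have hmap : ∀ j, μ.map (X j) = nuT T := fun j => hdist j
  have hmem : ∀ j, MemLp (X j) 2 μ := by
    intro j
    have h1 : MemLp (id : ℝ → ℝ) 2 (μ.map (X j)) := by
      rw [hmap j]; exact nuT_memℒp_id hT
    exact (memLp_map_measure_iff aestronglyMeasurable_id (hmeas j).aemeasurable).1 h1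
  have hE : ∀ j, ∫ ω, X j ω ∂μ = 0 := by
    intro j
    have h1 : ∫ x, x ∂(μ.map (X j)) = ∫ ω, X j ω ∂μ :=
      integral_map (hmeas j).aemeasurable aestronglyMeasurable_id
    rw [← h1, hmap j]
    exact nuT_mean_zero hT
  have hE2 : ∀ j, ∫ ω, (X j ω) ^ 2 ∂μ ≤ M := by
    intro j
    have h1 : ∫ x, x ^ 2 ∂(μ.map (X j)) = ∫ ω, (X j ω) ^ 2 ∂μ :=
      integral_map (hmeas j).aemeasurable (continuous_pow 2).aestronglyMeasurable
    rw [← h1, hmap j]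
    exact nuT_second_moment hT
  have hVar : ∀ j, variance (X j) μ ≤ M := by
    intro j
    rw [variance_eq_sub (hmem j)]
    simp only [Pi.pow_apply]
    have := sq_nonneg (∫ ω, X j ω ∂μ)
    linarith [hE2 j]
  -- scaled variables
  set a : dftGrid d N → ℝ := fun j =>
    (2 * Real.pi / N) ^ d * φ (fun i => 2 * Real.pi / N * ((j : Fin d → ℤ) i : ℝ)) with ha_def
  set Y : dftGrid d N → Ω → ℝ := fun j ω => a j * X j ω with hY_def
  have hmemY : ∀ j, MemLp (Y j) 2 μ := fun j => (hmem j).const_mul (a j)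
  have hEY : ∀ j, ∫ ω, Y j ω ∂μ = 0 := by
    intro j
    rw [hY_def]
    simp only
    rw [integral_const_mul, hE j, mul_zero]
  have hvarY : ∀ j, variance (Y j) μ = (a j) ^ 2 * variance (X j) μ := by
    intro j
    have hfun : (a j • X j) = Y j := by ext ω; simp [hY_def]
    rw [← hfun]
    exact variance_smul (a j) (X j) μ
  have haC : ∀ j, (a j) ^ 2 ≤ ((2 * Real.pi / N) ^ d) ^ 2 * C ^ 2 := by
    intro j
    have hb := hC _ (grid_point_mem_box hN hN2 j.2)
    rw [Real.norm_eq_abs] at hb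
    have h1 : (φ (fun i => 2 * Real.pi / N * ((j : Fin d → ℤ) i : ℝ))) ^ 2 ≤ C ^ 2 :=
      sq_le_sq' ((abs_le.1 hb).1) ((abs_le.1 hb).2)
    rw [ha_def]
    simp only
    rw [mul_pow]
    exact mul_le_mul_of_nonneg_left h1 (sq_nonneg _)
  -- sum
  set S : Ω → ℝ := ∑ j : dftGrid d N, Y j with hS_def
  have hmemS : MemLp S 2 μ := memLp_finsetSum' _ (fun j _ => hmemY j)
  have hES : ∫ ω, S ω ∂μ = 0 := by
    rw [hS_def]
    have : ∀ ω, (∑ j : dftGrid d N, Y j) ω = ∑ j : dftGrid d N, Y j ω := by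
      intro ω; simp [Finset.sum_apply]
    simp only [this]
    rw [integral_finset_sum _ (fun j _ => (hmemY j).integrable one_le_two)]
    simp [hEY]
  have hvarS : variance S μ ≤ (N:ℝ) ^ d * (((2 * Real.pi / N) ^ d) ^ 2 * C ^ 2 * M) := by
    have hpair : Set.Pairwise ↑(Finset.univ : Finset (dftGrid d N))
        fun i j => IndepFun (Y i) (Y j) μ := by
      intro i _ k _ hik
      have h := (hindep.indepFun hik).comp
        (measurable_const_mul (a i)) (measurable_const_mul (a k))
      exact h
    rw [hS_def, IndepFun.variance_sum (fun j _ => hmemY j) hpair]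
    have hterm : ∀ j ∈ (Finset.univ : Finset (dftGrid d N)),
        variance (Y j) μ ≤ ((2 * Real.pi / N) ^ d) ^ 2 * C ^ 2 * M := by
      intro j _
      rw [hvarY j]
      calc (a j) ^ 2 * variance (X j) μ ≤ (a j) ^ 2 * M :=
            mul_le_mul_of_nonneg_left (hVar j) (sq_nonneg _)
        _ ≤ ((2 * Real.pi / N) ^ d) ^ 2 * C ^ 2 * M :=
            mul_le_mul_of_nonneg_right (haC j) hM0
    calc ∑ j : dftGrid d N, variance (Y j) μ
        ≤ (Finset.univ : Finset (dftGrid d N)).card •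
            (((2 * Real.pi / N) ^ d) ^ 2 * C ^ 2 * M) :=
          Finset.sum_le_card_nsmul _ _ _ hterm
      _ = (N:ℝ) ^ d * (((2 * Real.pi / N) ^ d) ^ 2 * C ^ 2 * M) := by
          rw [Finset.card_univ, Fintype.card_coe, dftGrid_card d N hN, nsmul_eq_mul]
          push_cast
          ring
  -- Chebyshev
  have hseteq : {ω | ε ≤ dist ((2 * Real.pi / N) ^ d *
        ∑ j : dftGrid d N, X j ω * φ (fun i => 2 * Real.pi / N * ((j : Fin d → ℤ) i : ℝ))) 0}
      = {ω | ε ≤ |S ω - ∫ ω', S ω' ∂μ|} := by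
    ext ω
    rw [Set.mem_setOf_eq, Set.mem_setOf_eq, hES, sub_zero, Real.dist_eq, sub_zero]
    have : (2 * Real.pi / N) ^ d *
        ∑ j : dftGrid d N, X j ω * φ (fun i => 2 * Real.pi / N * ((j : Fin d → ℤ) i : ℝ))
        = S ω := by
      rw [hS_def]
      simp only [Finset.sum_apply]
      rw [Finset.mul_sum]
      refine Finset.sum_congr rfl fun j _ => ?_
      rw [hY_def, ha_def]
      ring
    rw [this]
  have hcheb := meas_ge_le_variance_div_sq (μ := μ) hmemS hε
  rw [hseteq]
  refine le_trans hcheb (ENNReal.ofReal_le_ofReal ?_)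
  gcongr
  exact le_trans hvarS (by
    have := arith_bound d N hd hN2 σ C hσ hC0
    calc (N:ℝ) ^ d * (((2 * Real.pi / N) ^ d) ^ 2 * C ^ 2 * M)
        = ((N:ℝ) ^ d) * (((2 * Real.pi / N) ^ d) ^ 2 * C ^ 2 *
          (Real.exp 1 * quartC * (σ ^ 2 * rhoGrid N ^ ((d:ℝ)/2)) ^ ((3:ℝ)/4) / 2)) := by
          rw [hM_def, hT_def]
      _ ≤ _ := this)
/-- Corollary 4.1 of the paper.  Let `d ≥ 1`, `σ > 0`,
`V(x) = x⁴/4 − x²/2`.  For each even `N ≥ 2` let `(X_j^{(N)})`, indexed by the grid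
`{−N/2,…,N/2−1}^d`, be i.i.d. real random variables with density proportional to
`exp(−2V(x)/(σ²ρ^{d/2}))`, `ρ = N²/(4π²)`.  Then for every continuous (`2π`-periodic
in each coordinate) test function `φ : 𝕋^d → ℝ`, the pairing
`⟨u_N, φ⟩ = (2π/N)^d ∑_j X_j^{(N)} φ(x_j)` with `x_j = (2π/N) j` converges to `0` in
probability as `N → ∞` through even `N ≥ 2`. -/
theorem decoupled_allen_cahn_converges_to_zero_distribution
    (d : ℕ) (hd : 1 ≤ d) (σ : ℝ) (hσ : 0 < σ)
    {Ω : Type*} [MeasurableSpace Ω] (μ : Measure Ω) [IsProbabilityMeasure μ]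
    (X : (N : ℕ) → dftGrid d N → Ω → ℝ)
    (hmeas : ∀ N, ∀ j : dftGrid d N, Measurable (X N j))
    (hindep : ∀ N : ℕ, Even N → 2 ≤ N → iIndepFun (X N) μ)
    (hdist : ∀ N : ℕ, Even N → 2 ≤ N → ∀ j : dftGrid d N,
      μ.map (X N j) = volume.withDensity (fun x => ENNReal.ofReal
        (stationaryDensity d N σ x / ∫ y : ℝ, stationaryDensity d N σ y)))
    (φ : (Fin d → ℝ) → ℝ) (hφ : Continuous φ)
    (hper : ∀ (x : Fin d → ℝ) (i : Fin d),
      φ (Function.update x i (x i + 2 * Real.pi)) = φ x) :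
    TendstoInMeasure μ
      (fun (N : ℕ) (ω : Ω) => (2 * Real.pi / N) ^ d *
        ∑ j : dftGrid d N, X N j ω *
          φ (fun i => 2 * Real.pi / N * ((j : Fin d → ℤ) i : ℝ)))
      (atTop ⊓ Filter.principal {N | Even N ∧ 2 ≤ N})
      (fun _ => 0) := by
  rw [tendstoInMeasure_iff_dist]
  intro ε hε
  -- bound for φ on the fundamental box
  obtain ⟨C₀, hC₀⟩ := (isCompact_Icc (a := fun _ : Fin d => -Real.pi)
    (b := fun _ : Fin d => Real.pi)).exists_bound_of_continuousOn hφ.continuousOn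
  set C : ℝ := |C₀| with hC_def
  have hC : ∀ x ∈ Set.Icc (fun _ : Fin d => -Real.pi) (fun _ : Fin d => Real.pi),
      ‖φ x‖ ≤ C := fun x hx => le_trans (hC₀ x hx) (le_abs_self C₀)
  set K : ℝ := (2 * Real.pi) ^ (2*d) * C ^ 2 * (Real.exp 1 * quartC / 2) *
      (σ ^ 2) ^ ((3:ℝ)/4) with hK_def
  -- the bound sequence tends to zero
  have hrtend : Tendsto (fun N : ℕ => K * (N:ℝ) ^ (-(d:ℝ)/4) / ε ^ 2) atTop (nhds 0) := by
    have h1 : Tendsto (fun x : ℝ => x ^ (-((d:ℝ)/4))) atTop (nhds 0) :=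
      tendsto_rpow_neg_atTop (by positivity)
    have h2 : Tendsto (fun N : ℕ => (N:ℝ) ^ (-(d:ℝ)/4)) atTop (nhds 0) := by
      have := h1.comp tendsto_natCast_atTop_atTop (α := ℕ)
      simpa [neg_div, Function.comp_def] using this
    have h3 := (h2.const_mul K).div_const (ε ^ 2)
    simpa using h3
  have hBtend : Tendsto (fun N : ℕ => ENNReal.ofReal (K * (N:ℝ) ^ (-(d:ℝ)/4) / ε ^ 2))
      atTop (nhds 0) := by
    have := ENNReal.tendsto_ofReal hrtend
    simpa using this
  rw [ENNReal.tendsto_nhds_zero]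
  intro δ hδ
  have hBev : ∀ᶠ N : ℕ in atTop ⊓ Filter.principal {N : ℕ | Even N ∧ 2 ≤ N},
      ENNReal.ofReal (K * (N:ℝ) ^ (-(d:ℝ)/4) / ε ^ 2) ≤ δ :=
    ((ENNReal.tendsto_nhds_zero.1 hBtend) δ hδ).filter_mono inf_le_left
  have hTev : ∀ᶠ N : ℕ in atTop ⊓ Filter.principal {N : ℕ | Even N ∧ 2 ≤ N},
      1 ≤ σ ^ 2 * rhoGrid N ^ ((d:ℝ)/2) :=
    ((T_tendsto d hd σ hσ).eventually_ge_atTop 1).filter_mono inf_le_left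
  have hSev : ∀ᶠ N : ℕ in atTop ⊓ Filter.principal {N : ℕ | Even N ∧ 2 ≤ N},
      N ∈ {N | Even N ∧ 2 ≤ N} :=
    eventually_inf_principal.2 (Eventually.of_forall fun N h => h)
  filter_upwards [hBev, hTev, hSev] with N hB hT hS
  obtain ⟨hNe, hN2⟩ := hS
  refine le_trans ?_ hB
  have := cheb_bound μ d N hd σ hσ (X N) (hmeas N) (hindep N hNe hN2)
    (hdist N hNe hN2) hNe hN2 hT φ hφ C (abs_nonneg C₀) hC ε hε
  calc μ {ω | ε ≤ dist ((2 * Real.pi / N) ^ d *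
        ∑ j : dftGrid d N, X N j ω *
          φ (fun i => 2 * Real.pi / N * ((j : Fin d → ℤ) i : ℝ))) ((fun _ => (0:ℝ)) ω)}
      ≤ ENNReal.ofReal ((K * (N:ℝ) ^ (-(d:ℝ)/4)) / ε ^ 2) := this
    _ = ENNReal.ofReal (K * (N:ℝ) ^ (-(d:ℝ)/4) / ε ^ 2) := by rw [mul_div_assoc]
end

section
/- Let σ > 0 and let N ≥ 2 be an integer. Then there exists a unique real number C > 1 satisfying C = (3σ²/(8π²)) ∑_{k ∈ ℤ², ‖k‖ ≤ N} 1/(C − 1 + ‖k‖²). -/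
/-- The finite set of lattice points `k ∈ ℤ²` with `‖k‖ ≤ N`, i.e. `k₁² + k₂² ≤ N²`. -/
noncomputable def latticeBall2 (N : ℕ) : Finset (ℤ × ℤ) :=
  (Finset.Icc (-(N : ℤ)) (N : ℤ) ×ˢ Finset.Icc (-(N : ℤ)) (N : ℤ)).filter
    (fun k => k.1 ^ 2 + k.2 ^ 2 ≤ (N : ℤ) ^ 2)

/-- For `σ > 0` and an integer `N ≥ 2` there is a unique real `C > 1`
satisfying the Wick renormalization fixed-point equation
`C = (3σ²/(8π²)) ∑_{k ∈ ℤ², ‖k‖ ≤ N} 1/(C − 1 + ‖k‖²)`. -/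
theorem wick_constant_exists_unique (σ : ℝ) (hσ : 0 < σ) (N : ℕ) (hN : 2 ≤ N) :
    ∃! C : ℝ, 1 < C ∧
      C = 3 * σ ^ 2 / (8 * Real.pi ^ 2) *
        ∑ k ∈ latticeBall2 N, 1 / (C - 1 + ((k.1 : ℝ) ^ 2 + (k.2 : ℝ) ^ 2)) := by
  have hπ := Real.pi_pos
  set A : ℝ := 3 * σ ^ 2 / (8 * Real.pi ^ 2) with hA
  have hApos : 0 < A := by positivity
  have h00 : ((0, 0) : ℤ × ℤ) ∈ latticeBall2 N := by
    simp only [latticeBall2, Finset.mem_filter, Finset.mem_product, Finset.mem_Icc]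
    refine ⟨⟨⟨by simp, by simp⟩, by simp, by simp⟩, by positivity⟩
  have hpos : ∀ C : ℝ, 1 < C → ∀ k : ℤ × ℤ,
      (0 : ℝ) < C - 1 + ((k.1 : ℝ) ^ 2 + (k.2 : ℝ) ^ 2) := by
    intro C hC k
    have h1 : (0 : ℝ) ≤ (k.1 : ℝ) ^ 2 + (k.2 : ℝ) ^ 2 := by positivity
    linarith
  set s : ℝ → ℝ :=
    fun C => ∑ k ∈ latticeBall2 N, 1 / (C - 1 + ((k.1 : ℝ) ^ 2 + (k.2 : ℝ) ^ 2)) with hs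
  have hanti : ∀ x y : ℝ, 1 < x → x ≤ y → s y ≤ s x := by
    intro x y hx hxy
    apply Finset.sum_le_sum
    intro k _
    exact one_div_le_one_div_of_le (hpos x hx k) (by linarith)
  set F : ℝ → ℝ := fun C => C - A * s C with hF
  have hmono : StrictMonoOn F (Set.Ioi (1 : ℝ)) := by
    intro x hx y hy hxy
    have h1 : s y ≤ s x := hanti x y hx hxy.le
    have h2 : A * s y ≤ A * s x := mul_le_mul_of_nonneg_left h1 hApos.le
    simp only [hF]
    linarith
  set ε : ℝ := min (A / 2) 1 with hε
  have hεpos : 0 < ε := lt_min (by positivity) one_pos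
  have hεA : ε ≤ A / 2 := min_le_left _ _
  have hε1 : ε ≤ 1 := min_le_right _ _
  set a : ℝ := 1 + ε with ha'
  have ha : 1 < a := by simp only [ha']; linarith
  set m : ℝ := max (A * (latticeBall2 N).card) 1 with hm
  have hm1 : (1 : ℝ) ≤ m := le_max_right _ _
  have hmA : A * (latticeBall2 N).card ≤ m := le_max_left _ _
  set b : ℝ := 1 + m with hb'
  have hab : a ≤ b := by simp only [ha', hb']; linarith
  have hcont : ContinuousOn F (Set.Icc a b) := by
    apply ContinuousOn.sub continuousOn_id
    apply ContinuousOn.mul continuousOn_const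
    apply continuousOn_finset_sum
    intro k _
    apply ContinuousOn.div continuousOn_const
    · fun_prop
    · intro x hx
      exact (hpos x (lt_of_lt_of_le ha hx.1) k).ne'
  have hFa : F a ≤ 0 := by
    have hkey : a - 1 + (((((0, 0) : ℤ × ℤ).1 : ℝ)) ^ 2 + ((((0, 0) : ℤ × ℤ).2 : ℝ)) ^ 2)
        = ε := by
      push_cast
      simp only [ha']
      ring
    have h : 1 / (a - 1 + (((((0, 0) : ℤ × ℤ).1 : ℝ)) ^ 2
        + ((((0, 0) : ℤ × ℤ).2 : ℝ)) ^ 2)) ≤ s a :=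
      Finset.single_le_sum
        (f := fun k : ℤ × ℤ => 1 / (a - 1 + ((k.1 : ℝ) ^ 2 + (k.2 : ℝ) ^ 2)))
        (fun k _ => le_of_lt (one_div_pos.mpr (hpos a ha k))) h00
    rw [hkey] at h
    have hA2 : 2 ≤ A / ε := by
      rw [le_div_iff₀ hεpos]; linarith
    have h3 : A * (1 / ε) ≤ A * s a := mul_le_mul_of_nonneg_left h hApos.le
    have h4 : A * (1 / ε) = A / ε := by ring
    have ha2 : a ≤ 2 := by simp only [ha']; linarith
    simp only [hF]
    linarith
  have hFb : 0 ≤ F b := by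
    have hub : s b ≤ (latticeBall2 N).card • ((1 : ℝ) / m) :=
      Finset.sum_le_card_nsmul (latticeBall2 N)
        (fun k : ℤ × ℤ => 1 / (b - 1 + ((k.1 : ℝ) ^ 2 + (k.2 : ℝ) ^ 2))) (1 / m)
        (fun k _ => by
          apply one_div_le_one_div_of_le (by linarith)
          have h1 : (0 : ℝ) ≤ (k.1 : ℝ) ^ 2 + (k.2 : ℝ) ^ 2 := by positivity
          simp only [hb']
          linarith)
    rw [nsmul_eq_mul] at hub
    have h5 : A * s b ≤ A * ((latticeBall2 N).card * (1 / m)) :=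
      mul_le_mul_of_nonneg_left hub hApos.le
    have h6 : A * ((latticeBall2 N).card * (1 / m)) ≤ 1 := by
      have heq : A * (((latticeBall2 N).card : ℝ) * (1 / m))
          = A * (latticeBall2 N).card / m := by ring
      rw [heq, div_le_one (by linarith)]
      exact hmA
    have hb1 : (1 : ℝ) ≤ b := by simp only [hb']; linarith
    simp only [hF]
    linarith
  obtain ⟨C, hCmem, hFC⟩ := intermediate_value_Icc hab hcont ⟨hFa, hFb⟩
  have hC1 : 1 < C := lt_of_lt_of_le ha hCmem.1
  refine ⟨C, ⟨hC1, ?_⟩, ?_⟩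
  · have hz : C - A * s C = 0 := hFC
    simp only [hs] at hz
    linarith
  · rintro y ⟨hy1, hy2⟩
    have hFy : F y = 0 := by
      simp only [hF, hs]
      linarith
    exact hmono.injOn (Set.mem_Ioi.mpr hy1) (Set.mem_Ioi.mpr hC1) (hFy.trans hFC.symm)
end

section
/- Let σ > 0 and for each integer N ≥ 2 let C_N > 1 be the unique solution of C_N = (3σ²/(8π²)) ∑_{k ∈ ℤ², ‖k‖ ≤ N} 1/(C_N − 1 + ‖k‖²). Then C_N → ∞ as N → ∞ and, more precisely, C_N / log N → 3σ²/(4π). -/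
set_option maxHeartbeats 1000000

open Real Filter Finset

section WickAux

/-- MVT step: for `F' = f` with `f` antitone on `[0,∞)`. -/
lemma mvt_step {f F : ℝ → ℝ} (hF : ∀ x : ℝ, 0 ≤ x → HasDerivAt F (f x) x)
    (hf : ∀ s t : ℝ, 0 ≤ s → s ≤ t → f t ≤ f s) (i : ℕ) :
    f (i + 1) ≤ F (i + 1) - F i ∧ F (i + 1) - F i ≤ f i := by
  have hi : (i : ℝ) < i + 1 := by linarith
  obtain ⟨c, hc, hs⟩ := exists_hasDerivAt_eq_slope F f hi
    (fun x hx => (hF x ((Nat.cast_nonneg i).trans hx.1)).continuousAt.continuousWithinAt)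
    (fun x hx => hF x ((Nat.cast_nonneg i).trans hx.1.le))
  have hs' : F (i + 1) - F i = f c := by rw [hs]; ring
  have hc0 : (0:ℝ) ≤ (i:ℝ) := Nat.cast_nonneg i
  constructor
  · rw [hs']; exact hf c (i+1) (hc0.trans hc.1.le) hc.2.le
  · rw [hs']; exact hf (i:ℝ) c hc0 hc.1.le

lemma teles_ub {f F : ℝ → ℝ} (hF : ∀ x : ℝ, 0 ≤ x → HasDerivAt F (f x) x)
    (hf : ∀ s t : ℝ, 0 ≤ s → s ≤ t → f t ≤ f s) (M : ℕ) :
    ∑ i ∈ Finset.range M, f (i + 1) ≤ F M - F 0 := by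
  have h := Finset.sum_range_sub (fun i : ℕ => F i) M
  calc ∑ i ∈ Finset.range M, f (i + 1)
      ≤ ∑ i ∈ Finset.range M, (F (i+1) - F i) :=
        Finset.sum_le_sum (fun i _ => by
          have := (mvt_step hF hf i).1
          push_cast
          push_cast at this
          linarith)
    _ = F M - F 0 := by push_cast at h ⊢; exact h

lemma teles_lb {f F : ℝ → ℝ} (hF : ∀ x : ℝ, 0 ≤ x → HasDerivAt F (f x) x)
    (hf : ∀ s t : ℝ, 0 ≤ s → s ≤ t → f t ≤ f s)
    (hf0 : ∀ x : ℝ, 0 ≤ x → 0 ≤ f x) (M : ℕ) :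
    F M - F 0 - f 0 ≤ ∑ i ∈ Finset.range M, f (i + 1) := by
  have h := Finset.sum_range_sub (fun i : ℕ => F i) M
  have h1 : F M - F 0 ≤ ∑ i ∈ Finset.range M, f i := by
    calc F M - F 0 = ∑ i ∈ Finset.range M, (F (i+1) - F i) := by push_cast at h ⊢; linarith
      _ ≤ ∑ i ∈ Finset.range M, f i :=
        Finset.sum_le_sum (fun i _ => by
          have := (mvt_step hF hf i).2
          push_cast at this ⊢; linarith)
  have h2 : ∑ i ∈ Finset.range M, f i ≤ (∑ i ∈ Finset.range M, f (i+1)) + f 0 := by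
    have h3 : ∑ i ∈ Finset.range (M+1), f i = (∑ i ∈ Finset.range M, f (i+1)) + f 0 := by
      have := Finset.sum_range_succ' (fun i : ℕ => f i) M
      push_cast at this ⊢; convert this using 2 <;> push_cast <;> ring_nf
    have h4 : ∑ i ∈ Finset.range M, f i ≤ ∑ i ∈ Finset.range (M+1), f i := by
      rw [Finset.sum_range_succ]
      have := hf0 M (Nat.cast_nonneg M)
      linarith
    linarith
  linarith

lemma sum_Icc_symm (φ : ℝ → ℝ) (hφ : ∀ x : ℝ, φ (-x) = φ x) (M : ℕ) :
    ∑ j ∈ Finset.Icc (-(M:ℤ)) M, φ (j : ℝ)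
      = φ 0 + 2 * ∑ i ∈ Finset.range M, φ ((i : ℝ) + 1) := by
  induction M with
  | zero => simp
  | succ M ih =>
    have h1 : Finset.Icc (-((M:ℤ)+1)) ((M:ℤ)+1)
        = insert (-((M:ℤ)+1)) (insert ((M:ℤ)+1) (Finset.Icc (-(M:ℤ)) M)) := by
      ext x; simp only [Finset.mem_Icc, Finset.mem_insert]; omega
    have hm1 : (-((M:ℤ)+1)) ∉ insert ((M:ℤ)+1) (Finset.Icc (-(M:ℤ)) M) := by
      simp only [Finset.mem_insert, Finset.mem_Icc]; omega
    have hm2 : ((M:ℤ)+1) ∉ Finset.Icc (-(M:ℤ)) M := by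
      simp only [Finset.mem_Icc]; omega
    rw [show ((M+1:ℕ):ℤ) = (M:ℤ)+1 by push_cast; ring, h1, Finset.sum_insert hm1,
      Finset.sum_insert hm2, ih, Finset.sum_range_succ]
    have e1 : ((-((M:ℤ)+1) : ℤ) : ℝ) = -((M:ℝ)+1) := by push_cast; ring
    have e2 : (((M:ℤ)+1 : ℤ) : ℝ) = (M:ℝ)+1 := by push_cast; ring
    rw [e1, e2, hφ]
    ring

lemma hasDerivAt_arctan_scaled {b : ℝ} (hb : 0 < b) (x : ℝ) :
    HasDerivAt (fun t : ℝ => (Real.sqrt b)⁻¹ * Real.arctan (t / Real.sqrt b))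
      (1 / (b + x ^ 2)) x := by
  have hsb : 0 < Real.sqrt b := Real.sqrt_pos.2 hb
  have h1 : HasDerivAt (fun t : ℝ => t / Real.sqrt b) (1 / Real.sqrt b) x := by
    simpa using (hasDerivAt_id x).div_const (Real.sqrt b)
  have h2 := (Real.hasDerivAt_arctan (x / Real.sqrt b)).comp x h1
  have h3 := h2.const_mul (Real.sqrt b)⁻¹
  refine h3.congr_deriv ?_
  have hbb : Real.sqrt b ^ 2 = b := Real.sq_sqrt hb.le
  have hne : Real.sqrt b ≠ 0 := hsb.ne'
  field_simp
  rw [hbb]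

lemma hasDerivAt_arsinh_scaled {a : ℝ} (ha : 0 < a) (x : ℝ) :
    HasDerivAt (fun t : ℝ => Real.arsinh (t / Real.sqrt a))
      (1 / Real.sqrt (a + x ^ 2)) x := by
  have hsa : 0 < Real.sqrt a := Real.sqrt_pos.2 ha
  have h1 : HasDerivAt (fun t : ℝ => t / Real.sqrt a) (1 / Real.sqrt a) x := by
    simpa using (hasDerivAt_id x).div_const (Real.sqrt a)
  have h2 := (Real.hasDerivAt_arsinh (x / Real.sqrt a)).comp x h1
  refine h2.congr_deriv ?_
  have hbb : Real.sqrt a ^ 2 = a := Real.sq_sqrt ha.le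
  have key : Real.sqrt (a + x ^ 2) = Real.sqrt a * Real.sqrt (1 + (x / Real.sqrt a) ^ 2) := by
    rw [← Real.sqrt_mul ha.le]
    congr 1
    field_simp
    rw [hbb]; ring
  rw [key]
  rw [one_div (Real.sqrt a * _), mul_inv]
  ring

lemma arctan_le_self' {x : ℝ} (hx : 0 ≤ x) : Real.arctan x ≤ x := by
  rcases eq_or_lt_of_le hx with h | h
  · simp [← h]
  · obtain ⟨c, hc, hs⟩ := exists_hasDerivAt_eq_slope Real.arctan
      (fun t => 1 / (1 + t ^ 2)) h
      (fun t _ => (Real.hasDerivAt_arctan t).continuousAt.continuousWithinAt)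
      (fun t _ => Real.hasDerivAt_arctan t)
    have h1 : Real.arctan x = (1 / (1 + c ^ 2)) * x := by
      rw [hs]; field_simp [Real.arctan_zero]; simp
    rw [h1]
    have h2 : 1 / (1 + c ^ 2) ≤ 1 := by
      rw [div_le_one (by positivity)]; nlinarith
    nlinarith
lemma arctan_ge {x : ℝ} (hx : 0 < x) : Real.pi / 2 - 1 / x ≤ Real.arctan x := by
  have h := Real.arctan_inv_of_pos hx
  have h2 : Real.arctan x⁻¹ ≤ x⁻¹ := arctan_le_self' (by positivity)
  rw [h] at h2
  rw [one_div]
  linarith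

lemma arsinh_le_log {y : ℝ} (hy : 0 ≤ y) : Real.arsinh y ≤ Real.log (1 + 2 * y) := by
  rw [Real.arsinh]
  apply Real.log_le_log (by positivity)
  have : Real.sqrt (1 + y ^ 2) ≤ 1 + y := by
    rw [show (1:ℝ) + y = Real.sqrt ((1+y)^2) from (Real.sqrt_sq (by positivity)).symm]
    apply Real.sqrt_le_sqrt; nlinarith
  linarith

lemma log_le_arsinh {y : ℝ} (hy : 0 < y) : Real.log y ≤ Real.arsinh y := by
  rw [Real.arsinh]
  apply Real.log_le_log hy
  nlinarith [Real.sqrt_nonneg (1 + y ^ 2)]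

lemma quad_anti {b : ℝ} (hb : 0 < b) : ∀ s t : ℝ, 0 ≤ s → s ≤ t →
    1 / (b + t ^ 2) ≤ 1 / (b + s ^ 2) :=
  fun s t hs hst => one_div_le_one_div_of_le (by positivity) (by nlinarith)

lemma isq_anti {b : ℝ} (hb : 0 < b) : ∀ s t : ℝ, 0 ≤ s → s ≤ t →
    1 / Real.sqrt (b + t ^ 2) ≤ 1 / Real.sqrt (b + s ^ 2) := fun s t hs hst =>
  one_div_le_one_div_of_le (Real.sqrt_pos.2 (by positivity))
    (Real.sqrt_le_sqrt (by nlinarith))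

lemma sum_quad_le {b : ℝ} (hb : 0 < b) (M : ℕ) :
    ∑ j ∈ Finset.Icc (-(M:ℤ)) M, 1 / (b + (j:ℝ) ^ 2) ≤ 1 / b + π / Real.sqrt b := by
  have hsb : 0 < Real.sqrt b := Real.sqrt_pos.2 hb
  rw [sum_Icc_symm (fun x => 1 / (b + x ^ 2)) (fun x => by simp [neg_sq]) M]
  have h := teles_ub (fun x _ => hasDerivAt_arctan_scaled hb x) (quad_anti hb) M
  simp only [zero_div, Real.arctan_zero, mul_zero, sub_zero] at h
  have h2 : Real.arctan ((M:ℝ) / Real.sqrt b) ≤ π / 2 :=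
    (Real.arctan_lt_pi_div_two _).le
  have h3 : (Real.sqrt b)⁻¹ * Real.arctan ((M:ℝ) / Real.sqrt b)
      ≤ (Real.sqrt b)⁻¹ * (π / 2) := by
    apply mul_le_mul_of_nonneg_left h2 (by positivity)
  have h4 : (1:ℝ) / (b + 0 ^ 2) = 1 / b := by norm_num
  rw [h4]
  have : π / Real.sqrt b = 2 * ((Real.sqrt b)⁻¹ * (π / 2)) := by field_simp
  rw [this]
  linarith

lemma sum_quad_ge {b : ℝ} (hb : 0 < b) (M : ℕ) :
    2 * ((Real.sqrt b)⁻¹ * Real.arctan ((M:ℝ) / Real.sqrt b)) - 1 / b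
      ≤ ∑ j ∈ Finset.Icc (-(M:ℤ)) M, 1 / (b + (j:ℝ) ^ 2) := by
  have hsb : 0 < Real.sqrt b := Real.sqrt_pos.2 hb
  rw [sum_Icc_symm (fun x => 1 / (b + x ^ 2)) (fun x => by simp [neg_sq]) M]
  have h := teles_lb (fun x _ => hasDerivAt_arctan_scaled hb x) (quad_anti hb)
    (fun x _ => by positivity) M
  simp only [zero_div, Real.arctan_zero, mul_zero, sub_zero] at h
  have h4 : (1:ℝ) / (b + 0 ^ 2) = 1 / b := by norm_num
  rw [h4]
  linarith

lemma sum_isq_le {b : ℝ} (hb : 0 < b) (M : ℕ) :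
    ∑ j ∈ Finset.Icc (-(M:ℤ)) M, 1 / Real.sqrt (b + (j:ℝ) ^ 2)
      ≤ 1 / Real.sqrt b + 2 * Real.arsinh ((M:ℝ) / Real.sqrt b) := by
  have hsb : 0 < Real.sqrt b := Real.sqrt_pos.2 hb
  rw [sum_Icc_symm (fun x => 1 / Real.sqrt (b + x ^ 2)) (fun x => by simp [neg_sq]) M]
  have h := teles_ub (fun x _ => hasDerivAt_arsinh_scaled hb x) (isq_anti hb) M
  simp only [zero_div, Real.arsinh_zero, sub_zero] at h
  have h4 : (1:ℝ) / Real.sqrt (b + 0 ^ 2) = 1 / Real.sqrt b := by norm_num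
  rw [h4]
  linarith

lemma sum_isq_ge {b : ℝ} (hb : 0 < b) (M : ℕ) :
    2 * Real.arsinh ((M:ℝ) / Real.sqrt b) - 1 / Real.sqrt b
      ≤ ∑ j ∈ Finset.Icc (-(M:ℤ)) M, 1 / Real.sqrt (b + (j:ℝ) ^ 2) := by
  have hsb : 0 < Real.sqrt b := Real.sqrt_pos.2 hb
  rw [sum_Icc_symm (fun x => 1 / Real.sqrt (b + x ^ 2)) (fun x => by simp [neg_sq]) M]
  have h := teles_lb (fun x _ => hasDerivAt_arsinh_scaled hb x) (isq_anti hb)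
    (fun x _ => by positivity) M
  simp only [zero_div, Real.arsinh_zero, sub_zero] at h
  have h4 : (1:ℝ) / Real.sqrt (b + 0 ^ 2) = 1 / Real.sqrt b := by norm_num
  rw [h4]
  linarith

lemma square_sum_le {a : ℝ} (ha : 0 < a) (M : ℕ) :
    ∑ k ∈ Finset.Icc (-(M:ℤ)) M ×ˢ Finset.Icc (-(M:ℤ)) M,
        1 / (a + ((k.1:ℝ) ^ 2 + (k.2:ℝ) ^ 2))
      ≤ 1 / a + 2 * π / Real.sqrt a + 2 * π * Real.arsinh ((M:ℝ) / Real.sqrt a) := by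
  have hsa : 0 < Real.sqrt a := Real.sqrt_pos.2 ha
  rw [Finset.sum_product]
  have step1 : ∀ j ∈ Finset.Icc (-(M:ℤ)) M,
      ∑ l ∈ Finset.Icc (-(M:ℤ)) M, 1 / (a + ((j:ℝ) ^ 2 + (l:ℝ) ^ 2))
        ≤ 1 / (a + (j:ℝ) ^ 2) + π / Real.sqrt (a + (j:ℝ) ^ 2) := by
    intro j _
    have hb : 0 < a + (j:ℝ) ^ 2 := by positivity
    calc ∑ l ∈ Finset.Icc (-(M:ℤ)) M, 1 / (a + ((j:ℝ) ^ 2 + (l:ℝ) ^ 2))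
        = ∑ l ∈ Finset.Icc (-(M:ℤ)) M, 1 / ((a + (j:ℝ) ^ 2) + (l:ℝ) ^ 2) := by
          simp only [add_assoc]
      _ ≤ _ := sum_quad_le hb M
  calc ∑ j ∈ Finset.Icc (-(M:ℤ)) M, ∑ l ∈ Finset.Icc (-(M:ℤ)) M,
          1 / (a + ((j:ℝ) ^ 2 + (l:ℝ) ^ 2))
      ≤ ∑ j ∈ Finset.Icc (-(M:ℤ)) M,
          (1 / (a + (j:ℝ) ^ 2) + π / Real.sqrt (a + (j:ℝ) ^ 2)) :=
        Finset.sum_le_sum step1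
    _ = (∑ j ∈ Finset.Icc (-(M:ℤ)) M, 1 / (a + (j:ℝ) ^ 2))
          + π * ∑ j ∈ Finset.Icc (-(M:ℤ)) M, 1 / Real.sqrt (a + (j:ℝ) ^ 2) := by
        rw [Finset.sum_add_distrib, Finset.mul_sum]
        simp only [mul_one_div]
    _ ≤ (1 / a + π / Real.sqrt a)
          + π * (1 / Real.sqrt a + 2 * Real.arsinh ((M:ℝ) / Real.sqrt a)) := by
        have := sum_quad_le ha M
        have h2 := mul_le_mul_of_nonneg_left (sum_isq_le ha M) Real.pi_pos.le
        linarith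
    _ = 1 / a + 2 * π / Real.sqrt a + 2 * π * Real.arsinh ((M:ℝ) / Real.sqrt a) := by
        field_simp; ring

lemma square_sum_ge {a : ℝ} (ha : 0 < a) {M : ℕ} (hM : 1 ≤ M) :
    2 * π * Real.arsinh ((M:ℝ) / Real.sqrt a) - 2 * π / Real.sqrt a - 1 / a - 6
      ≤ ∑ k ∈ Finset.Icc (-(M:ℤ)) M ×ˢ Finset.Icc (-(M:ℤ)) M,
          1 / (a + ((k.1:ℝ) ^ 2 + (k.2:ℝ) ^ 2)) := by
  have hsa : 0 < Real.sqrt a := Real.sqrt_pos.2 ha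
  have hM' : (1:ℝ) ≤ (M:ℝ) := by exact_mod_cast hM
  have hMpos : (0:ℝ) < (M:ℝ) := by linarith
  rw [Finset.sum_product]
  have step1 : ∀ j ∈ Finset.Icc (-(M:ℤ)) M,
      π / Real.sqrt (a + (j:ℝ) ^ 2) - 2 / (M:ℝ) - 1 / (a + (j:ℝ) ^ 2)
        ≤ ∑ l ∈ Finset.Icc (-(M:ℤ)) M, 1 / (a + ((j:ℝ) ^ 2 + (l:ℝ) ^ 2)) := by
    intro j _
    have hb : 0 < a + (j:ℝ) ^ 2 := by positivity
    have hsb : 0 < Real.sqrt (a + (j:ℝ) ^ 2) := Real.sqrt_pos.2 hb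
    have hx : 0 < (M:ℝ) / Real.sqrt (a + (j:ℝ) ^ 2) := by positivity
    have harc := arctan_ge hx
    have h1 : 1 / ((M:ℝ) / Real.sqrt (a + (j:ℝ) ^ 2))
        = Real.sqrt (a + (j:ℝ) ^ 2) / (M:ℝ) := by
      rw [one_div_div]
    rw [h1] at harc
    have h2 := sum_quad_ge hb M
    have h3 : 2 * ((Real.sqrt (a + (j:ℝ) ^ 2))⁻¹ * (π / 2 - Real.sqrt (a + (j:ℝ) ^ 2) / (M:ℝ)))
        ≤ 2 * ((Real.sqrt (a + (j:ℝ) ^ 2))⁻¹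
            * Real.arctan ((M:ℝ) / Real.sqrt (a + (j:ℝ) ^ 2))) := by
      have := mul_le_mul_of_nonneg_left harc (by positivity :
        (0:ℝ) ≤ (Real.sqrt (a + (j:ℝ) ^ 2))⁻¹)
      linarith
    have h4 : 2 * ((Real.sqrt (a + (j:ℝ) ^ 2))⁻¹ * (π / 2 - Real.sqrt (a + (j:ℝ) ^ 2) / (M:ℝ)))
        = π / Real.sqrt (a + (j:ℝ) ^ 2) - 2 / (M:ℝ) := by
      field_simp
    calc π / Real.sqrt (a + (j:ℝ) ^ 2) - 2 / (M:ℝ) - 1 / (a + (j:ℝ) ^ 2)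
        ≤ 2 * ((Real.sqrt (a + (j:ℝ) ^ 2))⁻¹
            * Real.arctan ((M:ℝ) / Real.sqrt (a + (j:ℝ) ^ 2))) - 1 / (a + (j:ℝ) ^ 2) := by
          rw [← h4]; linarith
      _ ≤ ∑ l ∈ Finset.Icc (-(M:ℤ)) M, 1 / ((a + (j:ℝ) ^ 2) + (l:ℝ) ^ 2) := h2
      _ = ∑ l ∈ Finset.Icc (-(M:ℤ)) M, 1 / (a + ((j:ℝ) ^ 2 + (l:ℝ) ^ 2)) := by
          simp only [add_assoc]
  have hcard : (Finset.Icc (-(M:ℤ)) M).card = 2 * M + 1 := by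
    rw [Int.card_Icc]
    omega
  have main : ∑ j ∈ Finset.Icc (-(M:ℤ)) M,
      (π / Real.sqrt (a + (j:ℝ) ^ 2) - 2 / (M:ℝ) - 1 / (a + (j:ℝ) ^ 2))
      ≤ ∑ j ∈ Finset.Icc (-(M:ℤ)) M, ∑ l ∈ Finset.Icc (-(M:ℤ)) M,
          1 / (a + ((j:ℝ) ^ 2 + (l:ℝ) ^ 2)) := Finset.sum_le_sum step1
  have expand : ∑ j ∈ Finset.Icc (-(M:ℤ)) M,
      (π / Real.sqrt (a + (j:ℝ) ^ 2) - 2 / (M:ℝ) - 1 / (a + (j:ℝ) ^ 2))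
      = π * (∑ j ∈ Finset.Icc (-(M:ℤ)) M, 1 / Real.sqrt (a + (j:ℝ) ^ 2))
        - ((2 * M + 1 : ℕ) : ℝ) * (2 / (M:ℝ))
        - ∑ j ∈ Finset.Icc (-(M:ℤ)) M, 1 / (a + (j:ℝ) ^ 2) := by
    rw [Finset.sum_sub_distrib, Finset.sum_sub_distrib, Finset.sum_const, Finset.mul_sum,
      hcard, nsmul_eq_mul]
    simp only [mul_one_div]
  have b1 := mul_le_mul_of_nonneg_left (sum_isq_ge ha M) Real.pi_pos.le
  have b2 := sum_quad_le ha M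
  have b3 : ((2 * M + 1 : ℕ) : ℝ) * (2 / (M:ℝ)) ≤ 6 := by
    push_cast
    have : (2 * (M:ℝ) + 1) * (2 / (M:ℝ)) = (4 * (M:ℝ) + 2) / (M:ℝ) := by
      field_simp; ring
    rw [this, div_le_iff₀ hMpos]
    nlinarith
  have b4 : 2 * π * Real.arsinh ((M:ℝ) / Real.sqrt a) - 2 * π / Real.sqrt a - 1 / a - 6
      ≤ π * (∑ j ∈ Finset.Icc (-(M:ℤ)) M, 1 / Real.sqrt (a + (j:ℝ) ^ 2))
        - ((2 * M + 1 : ℕ) : ℝ) * (2 / (M:ℝ))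
        - ∑ j ∈ Finset.Icc (-(M:ℤ)) M, 1 / (a + (j:ℝ) ^ 2) := by
    have e1 : π * (2 * Real.arsinh ((M:ℝ) / Real.sqrt a) - 1 / Real.sqrt a)
        = 2 * π * Real.arsinh ((M:ℝ) / Real.sqrt a) - π / Real.sqrt a := by ring
    rw [e1] at b1
    have e2 : 2 * π / Real.sqrt a = π / Real.sqrt a + π / Real.sqrt a := by ring
    linarith
  linarith [expand ▸ main]

lemma log_le_two_sqrt {x : ℝ} (hx : 0 < x) : Real.log x ≤ 2 * Real.sqrt x := by
  have h1 : Real.log (Real.sqrt x) ≤ Real.sqrt x - 1 :=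
    Real.log_le_sub_one_of_pos (Real.sqrt_pos.2 hx)
  have h2 : Real.log (Real.sqrt x) = Real.log x / 2 := Real.log_sqrt hx.le
  linarith

lemma sqrt_tendsto_atTop : Tendsto Real.sqrt atTop atTop := by
  rw [Filter.tendsto_atTop]
  intro b
  filter_upwards [Filter.eventually_ge_atTop (b ^ 2)] with x hx
  calc b ≤ |b| := le_abs_self b
    _ = Real.sqrt (b ^ 2) := (Real.sqrt_sq_eq_abs b).symm
    _ ≤ Real.sqrt x := Real.sqrt_le_sqrt hx

lemma one_le_log_three : (1:ℝ) ≤ Real.log 3 := by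
  have h := Real.exp_one_lt_d9
  have : Real.exp 1 ≤ 3 := by norm_num at h ⊢; linarith
  calc (1:ℝ) = Real.log (Real.exp 1) := (Real.log_exp 1).symm
    _ ≤ Real.log 3 := Real.log_le_log (Real.exp_pos 1) this

end WickAux

/-- Let `σ > 0` and for each `N ≥ 2` let `C_N > 1` be the unique
solution of `C_N = (3σ²/(8π²)) ∑_{k ∈ ℤ², ‖k‖ ≤ N} 1/(C_N − 1 + ‖k‖²)`.  Then
`C_N → ∞` and, more precisely, `C_N / log N → 3σ²/(4π)` as `N → ∞`. -/
theorem wick_constant_log_asymptotics (σ : ℝ) (hσ : 0 < σ) (C : ℕ → ℝ)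
    (hC : ∀ N : ℕ, 2 ≤ N → 1 < C N ∧
      C N = 3 * σ ^ 2 / (8 * Real.pi ^ 2) *
        ∑ k ∈ latticeBall2 N, 1 / (C N - 1 + ((k.1 : ℝ) ^ 2 + (k.2 : ℝ) ^ 2))) :
    Filter.Tendsto C Filter.atTop Filter.atTop ∧
    Filter.Tendsto (fun N : ℕ => C N / Real.log N) Filter.atTop
      (nhds (3 * σ ^ 2 / (4 * Real.pi))) := by
  have hπ := Real.pi_pos
  set κ : ℝ := 3 * σ ^ 2 / (8 * Real.pi ^ 2) with hκdef
  have hκ : 0 < κ := by positivity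
  set a₀ : ℝ := min 1 (κ / 2) with ha₀def
  have ha₀ : 0 < a₀ := lt_min one_pos (by positivity)
  have ha₀1 : a₀ ≤ 1 := min_le_left _ _
  have hsa₀ : 0 < Real.sqrt a₀ := Real.sqrt_pos.2 ha₀
  have hsa₀1 : Real.sqrt a₀ ≤ 1 := by
    rw [show (1:ℝ) = Real.sqrt 1 by simp]
    exact Real.sqrt_le_sqrt ha₀1
  set K_U : ℝ := 1 / a₀ + 2 * π / Real.sqrt a₀ + 2 * π * Real.log (3 / Real.sqrt a₀)
    with hKUdef
  have hlog3 : 0 ≤ Real.log (3 / Real.sqrt a₀) := by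
    apply Real.log_nonneg
    rw [le_div_iff₀ hsa₀]
    linarith
  have hKU : 0 < K_U := by positivity
  set K_L : ℝ := 2 * π * Real.log 4 + 2 * π / Real.sqrt a₀ + 1 / a₀ + 6 with hKLdef
  have hKL : 0 < K_L := by
    have : 0 < Real.log 4 := Real.log_pos (by norm_num)
    positivity
  set U : ℕ → ℝ := fun N => κ * (2 * π * Real.log N + K_U) with hUdef
  -- basic per-N facts
  have key : ∀ N : ℕ, 2 ≤ N → a₀ ≤ C N - 1 ∧ C N ≤ U N ∧
      κ * (2 * π * Real.log N - π * Real.log (U N) - K_L) ≤ C N := by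
    intro N hN
    obtain ⟨h1, h2⟩ := hC N hN
    have haN : 0 < C N - 1 := by linarith
    have hNR : (2:ℝ) ≤ (N:ℝ) := by exact_mod_cast hN
    have hlogN : 0 < Real.log N := Real.log_pos (by linarith)
    -- nonnegativity of terms
    have hterm : ∀ k : ℤ × ℤ, 0 ≤ 1 / (C N - 1 + ((k.1:ℝ) ^ 2 + (k.2:ℝ) ^ 2)) := by
      intro k; positivity
    -- (0,0) in the ball
    have hmem : ((0,0) : ℤ × ℤ) ∈ latticeBall2 N := by
      simp only [latticeBall2, Finset.mem_filter, Finset.mem_product, Finset.mem_Icc]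
      refine ⟨⟨⟨by omega, by omega⟩, ⟨by omega, by omega⟩⟩, by positivity⟩
    have hsingle : 1 / (C N - 1)
        ≤ ∑ k ∈ latticeBall2 N, 1 / (C N - 1 + ((k.1:ℝ) ^ 2 + (k.2:ℝ) ^ 2)) := by
      have := Finset.single_le_sum (f := fun k : ℤ × ℤ =>
        1 / (C N - 1 + ((k.1:ℝ) ^ 2 + (k.2:ℝ) ^ 2))) (fun k _ => hterm k) hmem
      simpa using this
    -- lower bound on a := C N - 1
    have ha₀N : a₀ ≤ C N - 1 := by
      have hCs : κ * (1 / (C N - 1)) ≤ C N := by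
        calc κ * (1 / (C N - 1))
            ≤ κ * ∑ k ∈ latticeBall2 N, 1 / (C N - 1 + ((k.1:ℝ) ^ 2 + (k.2:ℝ) ^ 2)) :=
              mul_le_mul_of_nonneg_left hsingle hκ.le
          _ = C N := h2.symm
      have hprod : κ ≤ C N * (C N - 1) := by
        rw [mul_one_div, div_le_iff₀ haN] at hCs
        linarith
      rcases le_or_gt (C N) 2 with h | h
      · have : κ / 2 ≤ C N - 1 := by nlinarith
        exact le_trans (min_le_right _ _) this
      · have : (1:ℝ) ≤ C N - 1 := by linarith
        exact le_trans ha₀1 this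
    have haa : 0 < C N - 1 := haN
    have hsaN : Real.sqrt a₀ ≤ Real.sqrt (C N - 1) := Real.sqrt_le_sqrt ha₀N
    have hsaN' : 0 < Real.sqrt (C N - 1) := lt_of_lt_of_le hsa₀ hsaN
    -- upper bound
    have hsub : latticeBall2 N ⊆ Finset.Icc (-(N:ℤ)) N ×ˢ Finset.Icc (-(N:ℤ)) N :=
      Finset.filter_subset _ _
    have hSle : ∑ k ∈ latticeBall2 N, 1 / (C N - 1 + ((k.1:ℝ) ^ 2 + (k.2:ℝ) ^ 2))
        ≤ ∑ k ∈ Finset.Icc (-(N:ℤ)) N ×ˢ Finset.Icc (-(N:ℤ)) N,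
            1 / (C N - 1 + ((k.1:ℝ) ^ 2 + (k.2:ℝ) ^ 2)) :=
      Finset.sum_le_sum_of_subset_of_nonneg hsub (fun k _ _ => hterm k)
    have harsinh_le : Real.arsinh ((N:ℝ) / Real.sqrt (C N - 1))
        ≤ Real.log N + Real.log (3 / Real.sqrt a₀) := by
      have hmono : (N:ℝ) / Real.sqrt (C N - 1) ≤ (N:ℝ) / Real.sqrt a₀ := by
        apply div_le_div_of_nonneg_left (by linarith) hsa₀ hsaN
      calc Real.arsinh ((N:ℝ) / Real.sqrt (C N - 1))
          ≤ Real.arsinh ((N:ℝ) / Real.sqrt a₀) := Real.arsinh_le_arsinh.2 hmono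
        _ ≤ Real.log (1 + 2 * ((N:ℝ) / Real.sqrt a₀)) := arsinh_le_log (by positivity)
        _ ≤ Real.log ((N:ℝ) * (3 / Real.sqrt a₀)) := by
            apply Real.log_le_log (by positivity)
            have h1N : 1 ≤ (N:ℝ) / Real.sqrt a₀ := by
              rw [le_div_iff₀ hsa₀]; linarith
            have e : (N:ℝ) * (3 / Real.sqrt a₀) = 3 * ((N:ℝ) / Real.sqrt a₀) := by ring
            rw [e]
            linarith
        _ = Real.log N + Real.log (3 / Real.sqrt a₀) := by
            rw [Real.log_mul (by positivity) (by positivity)]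
    have hub : C N ≤ U N := by
      rw [h2]
      have hchain : ∑ k ∈ latticeBall2 N, 1 / (C N - 1 + ((k.1:ℝ) ^ 2 + (k.2:ℝ) ^ 2))
          ≤ 2 * π * Real.log N + K_U := by
        calc _ ≤ ∑ k ∈ Finset.Icc (-(N:ℤ)) N ×ˢ Finset.Icc (-(N:ℤ)) N,
              1 / (C N - 1 + ((k.1:ℝ) ^ 2 + (k.2:ℝ) ^ 2)) := hSle
          _ ≤ 1 / (C N - 1) + 2 * π / Real.sqrt (C N - 1)
              + 2 * π * Real.arsinh ((N:ℝ) / Real.sqrt (C N - 1)) := square_sum_le haa N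
          _ ≤ 1 / a₀ + 2 * π / Real.sqrt a₀
              + 2 * π * (Real.log N + Real.log (3 / Real.sqrt a₀)) := by
            have e1 : 1 / (C N - 1) ≤ 1 / a₀ := one_div_le_one_div_of_le ha₀ ha₀N
            have e2 : 2 * π / Real.sqrt (C N - 1) ≤ 2 * π / Real.sqrt a₀ :=
              div_le_div_of_nonneg_left (by positivity) hsa₀ hsaN
            have e3 := mul_le_mul_of_nonneg_left harsinh_le
              (by positivity : (0:ℝ) ≤ 2 * π)
            linarith
          _ = 2 * π * Real.log N + K_U := by rw [hKUdef]; ring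
      calc κ * (∑ k ∈ latticeBall2 N, 1 / (C N - 1 + ((k.1:ℝ) ^ 2 + (k.2:ℝ) ^ 2)))
          ≤ κ * (2 * π * Real.log N + K_U) := mul_le_mul_of_nonneg_left hchain hκ.le
        _ = U N := rfl
    refine ⟨ha₀N, hub, ?_⟩
    -- lower bound
    set M : ℕ := N / 2 with hMdef
    have hM1 : 1 ≤ M := by omega
    have hsub2 : Finset.Icc (-(M:ℤ)) M ×ˢ Finset.Icc (-(M:ℤ)) M ⊆ latticeBall2 N := by
      intro k hk
      simp only [Finset.mem_product, Finset.mem_Icc] at hk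
      simp only [latticeBall2, Finset.mem_filter, Finset.mem_product, Finset.mem_Icc]
      have hMN : (M:ℤ) ≤ (N:ℤ) := by exact_mod_cast Nat.div_le_self N 2
      have h2M : 2 * (M:ℤ) ≤ (N:ℤ) := by
        have : 2 * M ≤ N := by omega
        exact_mod_cast this
      have hk1 : k.1 ^ 2 ≤ (M:ℤ) ^ 2 := by nlinarith [hk.1.1, hk.1.2]
      have hk2 : k.2 ^ 2 ≤ (M:ℤ) ^ 2 := by nlinarith [hk.2.1, hk.2.2]
      have hMpos : (0:ℤ) ≤ (M:ℤ) := by positivity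
      refine ⟨⟨⟨by omega, by omega⟩, ⟨by omega, by omega⟩⟩, by nlinarith⟩
    have hSge : ∑ k ∈ Finset.Icc (-(M:ℤ)) M ×ˢ Finset.Icc (-(M:ℤ)) M,
          1 / (C N - 1 + ((k.1:ℝ) ^ 2 + (k.2:ℝ) ^ 2))
        ≤ ∑ k ∈ latticeBall2 N, 1 / (C N - 1 + ((k.1:ℝ) ^ 2 + (k.2:ℝ) ^ 2)) :=
      Finset.sum_le_sum_of_subset_of_nonneg hsub2 (fun k _ _ => hterm k)
    have hUpos : 0 < U N := by
      have : 0 < 2 * π * Real.log N + K_U := by positivity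
      positivity
    have hlogaU : Real.log (C N - 1) ≤ Real.log (U N) :=
      Real.log_le_log haa (by linarith)
    have hMq : (N:ℝ) / 4 ≤ (M:ℝ) := by
      have h4M : N ≤ 4 * M := by omega
      have : (N:ℝ) ≤ 4 * (M:ℝ) := by exact_mod_cast h4M
      linarith
    have hMpos : (0:ℝ) < (M:ℝ) := by
      have : (0:ℝ) < (N:ℝ) / 4 := by linarith
      linarith
    have hlogM : Real.log N - Real.log 4 ≤ Real.log M := by
      calc Real.log N - Real.log 4 = Real.log ((N:ℝ) / 4) := by
            rw [Real.log_div (by linarith) (by norm_num)]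
        _ ≤ Real.log M := Real.log_le_log (by linarith) hMq
    have harsinh_ge : Real.log N - Real.log 4 - Real.log (U N) / 2
        ≤ Real.arsinh ((M:ℝ) / Real.sqrt (C N - 1)) := by
      have h1 : Real.log ((M:ℝ) / Real.sqrt (C N - 1))
          ≤ Real.arsinh ((M:ℝ) / Real.sqrt (C N - 1)) :=
        log_le_arsinh (by positivity)
      have h2 : Real.log ((M:ℝ) / Real.sqrt (C N - 1))
          = Real.log M - Real.log (C N - 1) / 2 := by
        rw [Real.log_div (by positivity) hsaN'.ne', Real.log_sqrt haa.le]
      rw [h2] at h1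
      have h3 : Real.log (C N - 1) / 2 ≤ Real.log (U N) / 2 := by linarith
      linarith
    have hlbS : 2 * π * (Real.log N - Real.log 4 - Real.log (U N) / 2)
        - 2 * π / Real.sqrt a₀ - 1 / a₀ - 6
        ≤ ∑ k ∈ latticeBall2 N, 1 / (C N - 1 + ((k.1:ℝ) ^ 2 + (k.2:ℝ) ^ 2)) := by
      have hsq := square_sum_ge haa hM1
      have e2 : 2 * π / Real.sqrt (C N - 1) ≤ 2 * π / Real.sqrt a₀ :=
        div_le_div_of_nonneg_left (by positivity) hsa₀ hsaN
      have e1 : 1 / (C N - 1) ≤ 1 / a₀ := one_div_le_one_div_of_le ha₀ ha₀N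
      have e3 := mul_le_mul_of_nonneg_left harsinh_ge (by positivity : (0:ℝ) ≤ 2 * π)
      linarith
    have : κ * (2 * π * (Real.log N - Real.log 4 - Real.log (U N) / 2)
        - 2 * π / Real.sqrt a₀ - 1 / a₀ - 6) ≤ C N := by
      rw [h2]
      exact mul_le_mul_of_nonneg_left hlbS hκ.le
    calc κ * (2 * π * Real.log N - π * Real.log (U N) - K_L)
        = κ * (2 * π * (Real.log N - Real.log 4 - Real.log (U N) / 2)
          - 2 * π / Real.sqrt a₀ - 1 / a₀ - 6) := by rw [hKLdef]; ring
      _ ≤ C N := this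
  -- limits
  have hlogT : Tendsto (fun N : ℕ => Real.log N) atTop atTop :=
    Real.tendsto_log_atTop.comp tendsto_natCast_atTop_atTop
  have hsqrtlogT : Tendsto (fun N : ℕ => Real.sqrt (Real.log N)) atTop atTop :=
    sqrt_tendsto_atTop.comp hlogT
  set c : ℝ := κ * (2 * π + K_U) with hcdef
  have hc : 0 < c := by positivity
  have evhi : ∀ᶠ N : ℕ in atTop,
      C N / Real.log N ≤ 2 * π * κ + κ * K_U / Real.log N := by
    filter_upwards [eventually_ge_atTop 3] with N hN3
    have hN : 2 ≤ N := by omega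
    obtain ⟨-, hub, -⟩ := key N hN
    have hN3' : (3:ℝ) ≤ (N:ℝ) := by exact_mod_cast hN3
    have hlog1 : 1 ≤ Real.log N :=
      le_trans one_le_log_three (Real.log_le_log (by norm_num) hN3')
    have hlogpos : 0 < Real.log N := by linarith
    rw [div_le_iff₀ hlogpos]
    have e : (2 * π * κ + κ * K_U / Real.log N) * Real.log N
        = 2 * π * κ * Real.log N + κ * K_U := by
      field_simp
    have hub' : C N ≤ κ * (2 * π * Real.log N + K_U) := hub
    rw [e]
    nlinarith
  have evlo : ∀ᶠ N : ℕ in atTop,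
      2 * π * κ - (2 * π * κ * Real.sqrt c) / Real.sqrt (Real.log N)
        - (κ * K_L) / Real.log N ≤ C N / Real.log N := by
    filter_upwards [eventually_ge_atTop 3] with N hN3
    have hN : 2 ≤ N := by omega
    obtain ⟨-, hub, hlb⟩ := key N hN
    have hN3' : (3:ℝ) ≤ (N:ℝ) := by exact_mod_cast hN3
    have hlog1 : 1 ≤ Real.log N :=
      le_trans one_le_log_three (Real.log_le_log (by norm_num) hN3')
    have hlogpos : 0 < Real.log N := by linarith
    have hslpos : 0 < Real.sqrt (Real.log N) := Real.sqrt_pos.2 hlogpos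
    have hUpos : 0 < U N := by
      have h0 : 0 < 2 * π * Real.log N + K_U := by positivity
      exact mul_pos hκ h0
    have hUc : U N ≤ c * Real.log N := by
      have : κ * (2 * π * Real.log N + K_U) ≤ κ * ((2 * π + K_U) * Real.log N) := by
        apply mul_le_mul_of_nonneg_left _ hκ.le
        nlinarith
      calc U N = κ * (2 * π * Real.log N + K_U) := rfl
        _ ≤ κ * ((2 * π + K_U) * Real.log N) := this
        _ = c * Real.log N := by rw [hcdef]; ring
    have hlogU : Real.log (U N) ≤ 2 * Real.sqrt c * Real.sqrt (Real.log N) := by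
      calc Real.log (U N) ≤ Real.log (c * Real.log N) := Real.log_le_log hUpos hUc
        _ ≤ 2 * Real.sqrt (c * Real.log N) := log_le_two_sqrt (by positivity)
        _ = 2 * Real.sqrt c * Real.sqrt (Real.log N) := by
            rw [Real.sqrt_mul hc.le]; ring
    rw [le_div_iff₀ hlogpos]
    have e1 : ((2 * π * κ * Real.sqrt c) / Real.sqrt (Real.log N)) * Real.log N
        = 2 * π * κ * Real.sqrt c * Real.sqrt (Real.log N) := by
      rw [div_mul_eq_mul_div, mul_div_assoc, Real.div_sqrt]
    have e2 : ((κ * K_L) / Real.log N) * Real.log N = κ * K_L := by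
      field_simp
    have expand : (2 * π * κ - (2 * π * κ * Real.sqrt c) / Real.sqrt (Real.log N)
          - (κ * K_L) / Real.log N) * Real.log N
        = 2 * π * κ * Real.log N - 2 * π * κ * Real.sqrt c * Real.sqrt (Real.log N)
          - κ * K_L := by
      calc (2 * π * κ - (2 * π * κ * Real.sqrt c) / Real.sqrt (Real.log N)
            - (κ * K_L) / Real.log N) * Real.log N
          = 2 * π * κ * Real.log N
            - ((2 * π * κ * Real.sqrt c) / Real.sqrt (Real.log N)) * Real.log N
            - ((κ * K_L) / Real.log N) * Real.log N := by ring
        _ = _ := by rw [e1, e2]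
    rw [expand]
    have hπU : π * Real.log (U N) ≤ π * (2 * Real.sqrt c * Real.sqrt (Real.log N)) :=
      mul_le_mul_of_nonneg_left hlogU hπ.le
    have step : κ * (2 * π * Real.log N
          - π * (2 * Real.sqrt c * Real.sqrt (Real.log N)) - K_L)
        ≤ κ * (2 * π * Real.log N - π * Real.log (U N) - K_L) :=
      mul_le_mul_of_nonneg_left (by linarith) hκ.le
    calc 2 * π * κ * Real.log N - 2 * π * κ * Real.sqrt c * Real.sqrt (Real.log N)
          - κ * K_L
        = κ * (2 * π * Real.log N
            - π * (2 * Real.sqrt c * Real.sqrt (Real.log N)) - K_L) := by ring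
      _ ≤ κ * (2 * π * Real.log N - π * Real.log (U N) - K_L) := step
      _ ≤ C N := hlb
  have hhiT : Tendsto (fun N : ℕ => 2 * π * κ + κ * K_U / Real.log N) atTop
      (nhds (2 * π * κ)) := by
    have h0 := hlogT.const_div_atTop (κ * K_U)
    simpa using tendsto_const_nhds.add h0
  have hloT : Tendsto (fun N : ℕ => 2 * π * κ
      - (2 * π * κ * Real.sqrt c) / Real.sqrt (Real.log N)
      - (κ * K_L) / Real.log N) atTop (nhds (2 * π * κ)) := by
    have h1 := hsqrtlogT.const_div_atTop (2 * π * κ * Real.sqrt c)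
    have h2 := hlogT.const_div_atTop (κ * K_L)
    simpa using (tendsto_const_nhds.sub h1).sub h2
  have hratio : Tendsto (fun N : ℕ => C N / Real.log N) atTop (nhds (2 * π * κ)) :=
    tendsto_of_tendsto_of_tendsto_of_le_of_le' hloT hhiT evlo evhi
  have hLeq : 2 * π * κ = 3 * σ ^ 2 / (4 * Real.pi) := by
    rw [hκdef]; field_simp; ring
  rw [hLeq] at hratio
  have hLpos : 0 < 3 * σ ^ 2 / (4 * Real.pi) := by positivity
  have hCT : Tendsto C atTop atTop := by
    have hmul := hratio.pos_mul_atTop hLpos hlogT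
    apply hmul.congr'
    filter_upwards [eventually_ge_atTop 2] with N hN
    have hN' : (1:ℝ) < (N:ℝ) := by
      have : (2:ℝ) ≤ (N:ℝ) := by exact_mod_cast hN
      linarith
    have hlogpos : 0 < Real.log N := Real.log_pos hN'
    exact div_mul_cancel₀ _ hlogpos.ne'
  exact ⟨hCT, hratio⟩
end

section
/- Let (C_N)_{N ≥ 2} be any sequence of real numbers with C_N > 1 for all N and C_N → ∞ as N → ∞, and let s < 0. Then ∑_{k ∈ ℤ², ‖k‖ ≤ N} (1 + ‖k‖²)^s / (C_N − 1 + ‖k‖²) → 0 as N → ∞. -/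
open Filter Real

/-- Let `(C_N)_{N ≥ 2}` be any sequence with `C_N > 1` and `C_N → ∞`,
and let `s < 0`.  Then `∑_{k ∈ ℤ², ‖k‖ ≤ N} (1 + ‖k‖²)^s / (C_N − 1 + ‖k‖²) → 0`
as `N → ∞`. -/
theorem renormalized_sobolev_norm_vanishes (C : ℕ → ℝ) (hC1 : ∀ N, 1 < C N)
    (hCtop : Filter.Tendsto C Filter.atTop Filter.atTop) (s : ℝ) (hs : s < 0) :
    Filter.Tendsto
      (fun N : ℕ => ∑ k ∈ latticeBall2 N,
        (1 + ((k.1 : ℝ) ^ 2 + (k.2 : ℝ) ^ 2)) ^ s /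
          (C N - 1 + ((k.1 : ℝ) ^ 2 + (k.2 : ℝ) ^ 2)))
      Filter.atTop (nhds 0) := by
  set θ : ℝ := min (-s) 1 / 2 with hθdef
  have hθpos : 0 < θ := by
    have h1 : 0 < min (-s) 1 := lt_min (by linarith) one_pos
    simp only [hθdef]; linarith
  have hθle : θ ≤ 1 / 2 := by
    have := min_le_right (-s) 1
    simp only [hθdef]; linarith
  have hθs : θ ≤ -s / 2 := by
    have := min_le_left (-s) 1
    simp only [hθdef]; linarith
  set p : ℝ := s - 1 + θ with hpdef
  have hp : p < -1 := by simp only [hpdef]; linarith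
  set q : ℝ := p / 2 with hqdef
  have hq0 : q < 0 := by simp only [hqdef]; linarith
  clear_value θ p q
  -- the 1D summable majorant
  set g : ℤ → ℝ := fun n => (1 + (n : ℝ) ^ 2) ^ q with hgdef
  clear_value g
  have hgnonneg : ∀ n, 0 ≤ g n := fun n => by
    rw [hgdef]
    exact Real.rpow_nonneg (by positivity) _
  have hnat : Summable (fun n : ℕ => (1 + (n : ℝ) ^ 2) ^ q) := by
    rw [← summable_nat_add_iff 1]
    have hmaj : Summable (fun n : ℕ => ((n : ℝ) + 1) ^ p) := by
      have h1 := Real.summable_nat_rpow.mpr hp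
      have h2 := (summable_nat_add_iff 1).mpr h1
      apply h2.congr
      intro n; push_cast; ring_nf
    apply Summable.of_nonneg_of_le _ _ hmaj
    · intro n; apply Real.rpow_nonneg; positivity
    · intro n
      have hx : (0 : ℝ) < (n : ℝ) + 1 := by positivity
      have h1 : (1 + ((n : ℕ) + 1 : ℝ) ^ 2) ^ q ≤ (((n : ℝ) + 1) ^ 2) ^ q := by
        apply Real.rpow_le_rpow_of_nonpos (by positivity) (by push_cast; nlinarith) hq0.le
      have h2 : (((n : ℝ) + 1) ^ 2) ^ q = ((n : ℝ) + 1) ^ p := by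
        rw [← Real.rpow_natCast ((n : ℝ) + 1) 2, ← Real.rpow_mul hx.le]
        norm_num [hqdef]; ring_nf
      calc (1 + ((n + 1 : ℕ) : ℝ) ^ 2) ^ q ≤ (((n : ℝ) + 1) ^ 2) ^ q := by
            push_cast; push_cast at h1; exact h1
        _ = ((n : ℝ) + 1) ^ p := h2
  have hgsummable : Summable g := by
    apply Summable.of_nat_of_neg
    · exact hnat.congr fun n => by simp [hgdef]
    · exact hnat.congr fun n => by simp [hgdef]
  set S : ℝ := ∑' n : ℤ, g n with hSdef
  clear_value S
  have hSnonneg : 0 ≤ S := hSdef ▸ tsum_nonneg hgnonneg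
  -- the 1D partial sums are bounded by S
  have h1D : ∀ N : ℕ, ∑ n ∈ Finset.Icc (-(N : ℤ)) (N : ℤ), g n ≤ S := fun N =>
    hSdef ▸ Summable.sum_le_tsum _ (fun n _ => hgnonneg n) hgsummable
  -- nonnegativity of the target
  have hF0 : ∀ N : ℕ, 0 ≤ ∑ k ∈ latticeBall2 N,
      (1 + ((k.1 : ℝ) ^ 2 + (k.2 : ℝ) ^ 2)) ^ s /
        (C N - 1 + ((k.1 : ℝ) ^ 2 + (k.2 : ℝ) ^ 2)) := by
    intro N
    apply Finset.sum_nonneg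
    intro k _
    have h1 := hC1 N
    apply div_nonneg (Real.rpow_nonneg (by positivity) _)
    nlinarith [sq_nonneg ((k.1 : ℝ)), sq_nonneg ((k.2 : ℝ))]
  -- key bound for N with C N ≥ 2
  have hbound : ∀ N : ℕ, 2 ≤ C N →
      (∑ k ∈ latticeBall2 N,
        (1 + ((k.1 : ℝ) ^ 2 + (k.2 : ℝ) ^ 2)) ^ s /
          (C N - 1 + ((k.1 : ℝ) ^ 2 + (k.2 : ℝ) ^ 2)))
      ≤ 2 * S ^ 2 * (C N - 1) ^ (-θ) := by
    intro N hCN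
    have ha : (0 : ℝ) < C N - 1 := by linarith
    -- step 1: per-term bound
    have hterm : ∀ k : ℤ × ℤ,
        (1 + ((k.1 : ℝ) ^ 2 + (k.2 : ℝ) ^ 2)) ^ s /
          (C N - 1 + ((k.1 : ℝ) ^ 2 + (k.2 : ℝ) ^ 2))
        ≤ 2 * (C N - 1) ^ (-θ) *
            ((1 + (k.1 : ℝ) ^ 2) ^ q * (1 + (k.2 : ℝ) ^ 2) ^ q) := by
      intro k
      set m : ℝ := (k.1 : ℝ) ^ 2 + (k.2 : ℝ) ^ 2 with hmdef
      have hm0 : 0 ≤ m := by positivity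
      set b : ℝ := 1 + m with hbdef
      clear_value m b
      have hb1 : 1 ≤ b := by linarith
      have hb0 : 0 < b := by linarith
      -- geometric mean bound on the denominator
      have hgm : (C N - 1) ^ θ * b ^ (1 - θ) ≤ θ * (C N - 1) + (1 - θ) * b :=
        Real.geom_mean_le_arith_mean2_weighted hθpos.le (by linarith) ha.le hb0.le (by ring)
      have hden : (1 / 2) * ((C N - 1) ^ θ * b ^ (1 - θ)) ≤ C N - 1 + m := by
        have h1 : θ * (C N - 1) + (1 - θ) * b ≤ C N - 1 + b := by nlinarith
        have h2 : (C N - 1 + b) / 2 ≤ C N - 1 + m := by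
          simp only [hbdef]; nlinarith
        linarith
      have hdpos : (0 : ℝ) < (1 / 2) * ((C N - 1) ^ θ * b ^ (1 - θ)) := by
        have := Real.rpow_pos_of_pos ha θ
        have := Real.rpow_pos_of_pos hb0 (1 - θ)
        positivity
      have hstep : b ^ s / (C N - 1 + m) ≤
          b ^ s / ((1 / 2) * ((C N - 1) ^ θ * b ^ (1 - θ))) :=
        div_le_div_of_nonneg_left (Real.rpow_nonneg hb0.le s) hdpos hden
      have heq : b ^ s / ((1 / 2) * ((C N - 1) ^ θ * b ^ (1 - θ)))
          = 2 * (C N - 1) ^ (-θ) * b ^ p := by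
        rw [Real.rpow_neg ha.le]
        have hbp : b ^ p = b ^ s / b ^ (1 - θ) := by
          rw [← Real.rpow_sub hb0]
          congr 1
          rw [hpdef]; ring
        rw [hbp]
        have h1 : (C N - 1) ^ θ ≠ 0 := ne_of_gt (Real.rpow_pos_of_pos ha θ)
        have h2 : b ^ (1 - θ) ≠ 0 := ne_of_gt (Real.rpow_pos_of_pos hb0 _)
        field_simp
      have hsplit : b ^ p ≤ (1 + (k.1 : ℝ) ^ 2) ^ q * (1 + (k.2 : ℝ) ^ 2) ^ q := by
        have hx : (0 : ℝ) < (1 + (k.1 : ℝ) ^ 2) * (1 + (k.2 : ℝ) ^ 2) := by positivity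
        have hxy : (1 + (k.1 : ℝ) ^ 2) * (1 + (k.2 : ℝ) ^ 2) ≤ b ^ 2 := by
          simp only [hbdef, hmdef]; nlinarith [sq_nonneg ((k.1 : ℝ) * (k.2 : ℝ))]
        have h3 : (b ^ 2) ^ q ≤ ((1 + (k.1 : ℝ) ^ 2) * (1 + (k.2 : ℝ) ^ 2)) ^ q :=
          Real.rpow_le_rpow_of_nonpos hx hxy hq0.le
        have h4 : (b ^ 2) ^ q = b ^ p := by
          rw [← Real.rpow_natCast b 2, ← Real.rpow_mul hb0.le]
          congr 1
          rw [hqdef]; ring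
        have h5 : ((1 + (k.1 : ℝ) ^ 2) * (1 + (k.2 : ℝ) ^ 2)) ^ q
            = (1 + (k.1 : ℝ) ^ 2) ^ q * (1 + (k.2 : ℝ) ^ 2) ^ q :=
          Real.mul_rpow (by positivity) (by positivity)
        rw [h5] at h3
        linarith
      calc b ^ s / (C N - 1 + m) ≤ 2 * (C N - 1) ^ (-θ) * b ^ p := by
            rw [← heq]; exact hstep
        _ ≤ 2 * (C N - 1) ^ (-θ) *
              ((1 + (k.1 : ℝ) ^ 2) ^ q * (1 + (k.2 : ℝ) ^ 2) ^ q) := by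
            apply mul_le_mul_of_nonneg_left hsplit
            have := Real.rpow_pos_of_pos ha (-θ)
            positivity
    -- step 2: sum the bound
    set A : Finset ℤ := Finset.Icc (-(N : ℤ)) (N : ℤ) with hAdef
    clear_value A
    have hsub : latticeBall2 N ⊆ A ×ˢ A := by
      rw [hAdef]
      unfold latticeBall2
      exact Finset.filter_subset _ _
    have hTnn : 0 ≤ ∑ n ∈ A, g n := Finset.sum_nonneg fun n _ => hgnonneg n
    have hfac : ∑ k ∈ A ×ˢ A, ((1 + (k.1 : ℝ) ^ 2) ^ q * (1 + (k.2 : ℝ) ^ 2) ^ q)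
        = (∑ n ∈ A, g n) * (∑ n ∈ A, g n) := by
      rw [Finset.sum_mul_sum]
      rw [Finset.sum_product]
      simp [hgdef]
    have hnn2 : ∀ k : ℤ × ℤ, 0 ≤ (1 + (k.1 : ℝ) ^ 2) ^ q * (1 + (k.2 : ℝ) ^ 2) ^ q :=
      fun k => mul_nonneg (Real.rpow_nonneg (by positivity) _)
        (Real.rpow_nonneg (by positivity) _)
    have hsum2 : ∑ k ∈ latticeBall2 N, ((1 + (k.1 : ℝ) ^ 2) ^ q * (1 + (k.2 : ℝ) ^ 2) ^ q)
        ≤ S * S := by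
      calc ∑ k ∈ latticeBall2 N, ((1 + (k.1 : ℝ) ^ 2) ^ q * (1 + (k.2 : ℝ) ^ 2) ^ q)
          ≤ ∑ k ∈ A ×ˢ A, ((1 + (k.1 : ℝ) ^ 2) ^ q * (1 + (k.2 : ℝ) ^ 2) ^ q) :=
            Finset.sum_le_sum_of_subset_of_nonneg hsub fun k _ _ => hnn2 k
        _ = (∑ n ∈ A, g n) * (∑ n ∈ A, g n) := hfac
        _ ≤ S * S := by
            have hT : ∑ n ∈ A, g n ≤ S := hAdef ▸ h1D N
            exact mul_le_mul hT hT hTnn hSnonneg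
    have hcp : (0:ℝ) ≤ 2 * (C N - 1) ^ (-θ) :=
      mul_nonneg (by norm_num) (Real.rpow_nonneg ha.le _)
    calc (∑ k ∈ latticeBall2 N,
          (1 + ((k.1 : ℝ) ^ 2 + (k.2 : ℝ) ^ 2)) ^ s /
            (C N - 1 + ((k.1 : ℝ) ^ 2 + (k.2 : ℝ) ^ 2)))
        ≤ ∑ k ∈ latticeBall2 N, 2 * (C N - 1) ^ (-θ) *
            ((1 + (k.1 : ℝ) ^ 2) ^ q * (1 + (k.2 : ℝ) ^ 2) ^ q) :=
          Finset.sum_le_sum fun k _ => hterm k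
      _ = 2 * (C N - 1) ^ (-θ) *
            ∑ k ∈ latticeBall2 N, ((1 + (k.1 : ℝ) ^ 2) ^ q * (1 + (k.2 : ℝ) ^ 2) ^ q) := by
          rw [Finset.mul_sum]
      _ ≤ 2 * (C N - 1) ^ (-θ) * (S * S) := mul_le_mul_of_nonneg_left hsum2 hcp
      _ = 2 * S ^ 2 * (C N - 1) ^ (-θ) := by ring
  -- conclude by squeezing
  have hRHS : Tendsto (fun N : ℕ => 2 * S ^ 2 * (C N - 1) ^ (-θ)) atTop (nhds 0) := by
    have h1 : Tendsto (fun N : ℕ => C N - 1) atTop atTop :=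
      tendsto_atTop_add_const_right atTop (-1) hCtop
    have h2 : Tendsto (fun x : ℝ => x ^ (-θ)) atTop (nhds 0) := tendsto_rpow_neg_atTop hθpos
    have h3 := (h2.comp h1).const_mul (2 * S ^ 2)
    simpa using h3
  apply squeeze_zero' (Eventually.of_forall hF0) _ hRHS
  filter_upwards [hCtop.eventually_ge_atTop 2] with N hN
  exact hbound N hN
end
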